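/- arXiv:1812.10079 — 6 statements merged into one kernel-verified Lean document; each statement's English description precedes it below -/
import Mathlib

section
/- Let X be a reflexive Banach space with property (μ^s) such that the closed unit ball of X* is weak*-sequentially compact. Then X* has the Banach-Saks property. -/
open Filter Topology MeasureTheory Pointwise

noncomputable section

/-- A subset of a real normed space is *weakly compact* if it is compact in the weak topology. -/
def WeaklyCompact {X : Type*} [NormedAddCommGroup X] [NormedSpace ℝ X] (W : Set X) : Prop :=
  IsCompact (toWeakSpace ℝ X '' W)

/-- A sequence in the dual is weak*-null. -/
def WeakStarNull {X : Type*} [NormedAddCommGroup X] [NormedSpace ℝ X]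
    (f : ℕ → StrongDual ℝ X) : Prop :=
  ∀ x : X, Tendsto (fun n => f n x) atTop (𝓝 0)

/-- Convergence to `0` in the Mackey topology `μ(X*,X)`: uniform convergence to `0`
on every weakly compact subset of `X`. -/
def MackeyNull {X : Type*} [NormedAddCommGroup X] [NormedSpace ℝ X]
    (f : ℕ → StrongDual ℝ X) : Prop :=
  ∀ W : Set X, WeaklyCompact W → TendstoUniformlyOn (fun n x => f n x) 0 atTop W

/-- The sequence of Cesàro (arithmetic) means of `f` converges to `0` in the Mackey
topology `μ(X*,X)`. -/
def CesaroMackeyNull {X : Type*} [NormedAddCommGroup X] [NormedSpace ℝ X]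
    (f : ℕ → StrongDual ℝ X) : Prop :=
  ∀ W : Set X, WeaklyCompact W →
    TendstoUniformlyOn (fun N : ℕ => fun x => (N : ℝ)⁻¹ • ∑ n ∈ Finset.range N, f n x) 0 atTop W

/-- Property (μ^s): every weak*-null sequence in `X*` admits a subsequence all of whose
further subsequences are Cesàro convergent to `0` with respect to the Mackey topology. -/
def PropMuS (X : Type*) [NormedAddCommGroup X] [NormedSpace ℝ X] : Prop :=
  ∀ f : ℕ → StrongDual ℝ X, WeakStarNull f →
    ∃ φ : ℕ → ℕ, StrictMono φ ∧ ∀ ψ : ℕ → ℕ, StrictMono ψ →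
      CesaroMackeyNull (fun k => f (φ (ψ k)))

/-- The Banach-Saks property: every bounded sequence admits a subsequence whose
arithmetic means converge in norm. -/
def BanachSaksSpace (X : Type*) [NormedAddCommGroup X] [NormedSpace ℝ X] : Prop :=
  ∀ u : ℕ → X, Bornology.IsBounded (Set.range u) →
    ∃ φ : ℕ → ℕ, StrictMono φ ∧ ∃ y : X,
      Tendsto (fun N : ℕ => (N : ℝ)⁻¹ • ∑ k ∈ Finset.range N, u (φ k)) atTop (𝓝 y)


theorem myBallWeaklyCompact {X : Type*} [NormedAddCommGroup X] [NormedSpace ℝ X] [CompleteSpace X]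
    (hrefl : Function.Surjective (NormedSpace.inclusionInDoubleDual ℝ X)) :
    WeaklyCompact (Metric.closedBall (0:X) 1) := by
  show IsCompact (toWeakSpace ℝ X '' Metric.closedBall (0:X) 1)
  have hinj : Function.Injective (NormedSpace.inclusionInDoubleDual ℝ X) :=
    (NormedSpace.inclusionInDoubleDualLi (E := X) ℝ).injective
  have hnm : ∀ z : X, ‖NormedSpace.inclusionInDoubleDual ℝ X z‖ = ‖z‖ := fun z =>
    (NormedSpace.inclusionInDoubleDualLi (E := X) ℝ).norm_map z
  have hScomp : IsCompact (WeakDual.toStrongDual ⁻¹' Metric.closedBall (0 : StrongDual ℝ (StrongDual ℝ X)) 1) :=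
    WeakDual.isCompact_closedBall (𝕜 := ℝ) (E := StrongDual ℝ X) 0 1
  set j : WeakDual ℝ (StrongDual ℝ X) → WeakSpace ℝ X :=
    fun F => toWeakSpace ℝ X (Function.surjInv hrefl (WeakDual.toStrongDual F)) with hj
  have hjcont : Continuous j := by
    apply WeakBilin.continuous_of_continuous_eval
    intro y
    have key : (fun F : WeakDual ℝ (StrongDual ℝ X) =>
        (topDualPairing ℝ X).flip (toWeakSpace ℝ X (Function.surjInv hrefl (WeakDual.toStrongDual F))) y)
        = fun F => F y := by
      funext F
      have h1 := Function.surjInv_eq hrefl (WeakDual.toStrongDual F)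
      have h2 : y (Function.surjInv hrefl (WeakDual.toStrongDual F)) = F y := by
        rw [← NormedSpace.dual_def ℝ X, h1]; rfl
      exact h2
    rw [hj]
    simp only
    rw [key]
    exact WeakDual.eval_continuous y
  have himg : toWeakSpace ℝ X '' Metric.closedBall (0:X) 1
      = j '' (WeakDual.toStrongDual ⁻¹' Metric.closedBall (0 : StrongDual ℝ (StrongDual ℝ X)) 1) := by
    ext z
    constructor
    · rintro ⟨x, hx, rfl⟩
      refine ⟨WeakDual.toStrongDual.symm (NormedSpace.inclusionInDoubleDual ℝ X x), ?_, ?_⟩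
      · simp only [Set.mem_preimage, LinearEquiv.apply_symm_apply, mem_closedBall_zero_iff]
        refine (mem_closedBall_zero_iff (E := StrongDual ℝ (StrongDual ℝ X))).mpr ((hnm x).trans_le ?_)
        simpa using hx
      · simp only [hj, LinearEquiv.apply_symm_apply]
        congr 1
        exact hinj (Function.surjInv_eq hrefl _)
    · rintro ⟨F, hF, rfl⟩
      refine ⟨Function.surjInv hrefl (WeakDual.toStrongDual F), ?_, rfl⟩
      have hF' : ‖WeakDual.toStrongDual F‖ ≤ 1 := by
        exact (mem_closedBall_zero_iff (E := StrongDual ℝ (StrongDual ℝ X))).mp hF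
      rw [mem_closedBall_zero_iff, ← hnm, Function.surjInv_eq hrefl]
      exact hF'
  rw [himg]
  exact hScomp.image hjcont

/-- If `X` is a reflexive Banach space with property (μ^s) whose dual unit ball is
weak*-sequentially compact, then `X*` has the Banach-Saks property. -/
theorem stmt3 {X : Type*} [NormedAddCommGroup X] [NormedSpace ℝ X] [CompleteSpace X]
    (hrefl : Function.Surjective (NormedSpace.inclusionInDoubleDual ℝ X))
    (hmu : PropMuS X)
    (hseq : ∀ f : ℕ → StrongDual ℝ X, (∀ n, ‖f n‖ ≤ 1) →
      ∃ φ : ℕ → ℕ, StrictMono φ ∧ ∃ g : StrongDual ℝ X,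
        ∀ x : X, Tendsto (fun k => f (φ k) x) atTop (𝓝 (g x))) :
    BanachSaksSpace (StrongDual ℝ X) := by
  intro u hu
  -- bound
  obtain ⟨r, hr⟩ := hu.subset_closedBall 0
  have hrnn : ∀ n, ‖u n‖ ≤ r := fun n => by
    simpa [Metric.mem_closedBall, dist_zero_right] using hr (Set.mem_range_self n)
  set c : ℝ := r + 1 with hc
  have hc0 : 0 < c := by
    have : (0:ℝ) ≤ r := le_trans (norm_nonneg _) (hrnn 0)
    linarith
  set f : ℕ → StrongDual ℝ X := fun n => c⁻¹ • u n with hf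
  have hf1 : ∀ n, ‖f n‖ ≤ 1 := by
    intro n
    rw [hf]
    simp only [norm_smul, norm_inv, Real.norm_eq_abs, abs_of_pos hc0]
    rw [inv_mul_le_iff₀ hc0]
    have := hrnn n; nlinarith
  obtain ⟨φ₁, hφ₁, g, hg⟩ := hseq f hf1
  set h : ℕ → StrongDual ℝ X := fun n => f (φ₁ n) - g with hh
  have hnull : WeakStarNull h := by
    intro x
    have := (hg x).sub_const (g x)
    simpa [hh] using this
  obtain ⟨φ₂, hφ₂, hces⟩ := hmu h hnull
  have hcm : CesaroMackeyNull (fun k => h (φ₂ k)) := by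
    simpa using hces id strictMono_id
  have hball := hcm (Metric.closedBall (0:X) 1) (myBallWeaklyCompact hrefl)
  -- norm convergence of Cesàro means of h ∘ φ₂
  set G : ℕ → StrongDual ℝ X := fun N => (N:ℝ)⁻¹ • ∑ n ∈ Finset.range N, h (φ₂ n) with hG
  have hGnorm : Tendsto G atTop (𝓝 0) := by
    rw [NormedAddCommGroup.tendsto_nhds_zero]
    intro ε hε
    rw [Metric.tendstoUniformlyOn_iff] at hball
    filter_upwards [hball (ε/2) (by linarith)] with N hN
    have hle : ‖G N‖ ≤ ε/2 := by
      apply ContinuousLinearMap.opNorm_le_bound _ (by linarith)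
      intro x
      rcases eq_or_ne x 0 with rfl | hx
      · simp
      · have hy : (‖x‖⁻¹ • x) ∈ Metric.closedBall (0:X) 1 := by
          simp [norm_smul, inv_mul_cancel₀ (norm_ne_zero_iff.mpr hx)]
        have := hN (‖x‖⁻¹ • x) hy
        have hval : dist ((0 : X → ℝ) (‖x‖⁻¹ • x))
            ((N:ℝ)⁻¹ • ∑ n ∈ Finset.range N, (h (φ₂ n)) (‖x‖⁻¹ • x)) < ε/2 := this
        rw [Pi.zero_apply, dist_zero_left] at hval
        have heq : G N (‖x‖⁻¹ • x)
            = (N:ℝ)⁻¹ • ∑ n ∈ Finset.range N, (h (φ₂ n)) (‖x‖⁻¹ • x) := by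
          simp only [hG, ContinuousLinearMap.coe_smul', Pi.smul_apply,
            ContinuousLinearMap.coe_sum', Finset.sum_apply]
        have h1 : ‖G N (‖x‖⁻¹ • x)‖ ≤ ε/2 := by rw [heq]; exact le_of_lt hval
        have h2 : G N x = ‖x‖ • G N (‖x‖⁻¹ • x) := by
          rw [← ContinuousLinearMap.map_smul, smul_smul, mul_inv_cancel₀ (norm_ne_zero_iff.mpr hx), one_smul]
        rw [h2, norm_smul, Real.norm_eq_abs, abs_of_nonneg (norm_nonneg x), mul_comm]
        exact mul_le_mul_of_nonneg_right h1 (norm_nonneg x)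
    calc ‖G N‖ ≤ ε/2 := hle
      _ < ε := by linarith
  refine ⟨φ₁ ∘ φ₂, hφ₁.comp hφ₂, c • g, ?_⟩
  have hmain : Tendsto (fun N : ℕ => c • (G N + g)) atTop (𝓝 (c • g)) := by
    have : Tendsto (fun N => G N + g) atTop (𝓝 (0 + g)) := hGnorm.add_const g
    rw [zero_add] at this
    exact this.const_smul c
  apply hmain.congr'
  filter_upwards [eventually_ge_atTop 1] with N hN
  have hNne : (N:ℝ) ≠ 0 := Nat.cast_ne_zero.mpr (by omega)
  have hsum : ∑ n ∈ Finset.range N, h (φ₂ n)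
      = (∑ n ∈ Finset.range N, f (φ₁ (φ₂ n))) - (N:ℝ) • g := by
    rw [hh]
    simp only [Finset.sum_sub_distrib, Finset.sum_const, Finset.card_range]
    congr 1
    exact ((Nat.cast_smul_eq_nsmul ℝ N g).symm)
  have : c • (G N + g) = (N:ℝ)⁻¹ • ∑ k ∈ Finset.range N, u (φ₁ (φ₂ k)) := by
    rw [hG]
    simp only
    rw [hsum, smul_sub, smul_smul, inv_mul_cancel₀ hNne, one_smul, sub_add_cancel]
    rw [smul_comm c]
    congr 1
    rw [Finset.smul_sum]
    apply Finset.sum_congr rfl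
    intro k _
    rw [hf]
    simp only
    rw [smul_smul, mul_inv_cancel₀ (ne_of_gt hc0), one_smul]
  simpa [Function.comp, smul_add] using this
end
end

section
/- Let X and Y be Banach spaces and T : Y → X an operator whose adjoint T* : X* → Y* is a Banach-Saks operator. Then X has property (μ^s_{{T(B_Y)}}): every weak*-null sequence in X* admits a subsequence all of whose further subsequences are Cesàro convergent to 0 uniformly on T(B_Y). -/
open Filter Topology MeasureTheory Pointwise

noncomputable section

/-- A family `H` of subsets of `X` is strongly generated by a family `G` if for every
`H₀ ∈ H` and `ε > 0` there is `G₀ ∈ G` with `H₀ ⊆ G₀ + ε B_X`. -/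
def StronglyGeneratedBy {X : Type*} [NormedAddCommGroup X] [NormedSpace ℝ X]
    (H G : Set (Set X)) : Prop :=
  ∀ H₀ ∈ H, ∀ ε : ℝ, 0 < ε → ∃ G₀ ∈ G, H₀ ⊆ G₀ + ε • Metric.closedBall (0 : X) 1

/-- Property (μ^s_A) for a family `A` of subsets of `X`: every weak*-null sequence in `X*`
admits a subsequence all of whose further subsequences are Cesàro convergent to `0`
uniformly on each element of `A`. -/
def PropMuSFam (X : Type*) [NormedAddCommGroup X] [NormedSpace ℝ X]
    (A : Set (Set X)) : Prop :=
  ∀ f : ℕ → StrongDual ℝ X, WeakStarNull f →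
    ∃ φ : ℕ → ℕ, StrictMono φ ∧ ∀ ψ : ℕ → ℕ, StrictMono ψ → ∀ A₀ ∈ A,
      TendstoUniformlyOn
        (fun N : ℕ => fun x => (N : ℝ)⁻¹ • ∑ k ∈ Finset.range N, f (φ (ψ k)) x)
        0 atTop A₀


section EMProof
namespace EMProof

open Finset


lemma strictMono_range_factor {g h : ℕ → ℕ} (hg : StrictMono g) (hh : StrictMono h)
    (hr : Set.range g ⊆ Set.range h) : ∃ e : ℕ → ℕ, StrictMono e ∧ g = h ∘ e := by
  choose e he using fun n => hr (Set.mem_range_self (f := g) n)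
  refine ⟨e, ?_, ?_⟩
  · intro a b hab
    have h2 := hg hab
    rw [← he a, ← he b] at h2
    exact hh.lt_iff_lt.mp h2
  · funext n; exact (he n).symm

/-- Infinite Ramsey theorem for `r`-element subsets of `ℕ`, two colours,
relativized to the range of a strictly monotone sequence. -/
theorem ramsey (r : ℕ) : ∀ (c : Finset ℕ → Bool) (M : ℕ → ℕ), StrictMono M →
    ∃ M' : ℕ → ℕ, StrictMono M' ∧ Set.range M' ⊆ Set.range M ∧
      ∃ b : Bool, ∀ s : Finset ℕ, ↑s ⊆ Set.range M' → s.card = r → c s = b := by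
  induction r with
  | zero =>
    intro c M hM
    refine ⟨M, hM, subset_rfl, c ∅, fun s _ hs => ?_⟩
    rw [Finset.card_eq_zero] at hs; subst hs; rfl
  | succ r ih =>
    intro c M hM
    have step : ∀ N : {g : ℕ → ℕ // StrictMono g},
        ∃ N' : {g : ℕ → ℕ // StrictMono g},
          Set.range N'.1 ⊆ Set.range N.1 ∧ (∀ n, N.1 0 < N'.1 n) ∧
          ∃ b : Bool, ∀ s : Finset ℕ, ↑s ⊆ Set.range N'.1 → s.card = r →
            c (insert (N.1 0) s) = b := by
      rintro ⟨N, hN⟩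
      obtain ⟨N', hN', hsub, b, hb⟩ := ih (fun s => c (insert (N 0) s)) (fun n => N (n + 1))
        (hN.comp (fun a b h => Nat.succ_lt_succ h))
      refine ⟨⟨N', hN'⟩, ?_, ?_, b, hb⟩
      · exact hsub.trans (by rintro x ⟨n, rfl⟩; exact ⟨n + 1, rfl⟩)
      · intro n
        obtain ⟨m, hm⟩ := hsub ⟨n, rfl⟩
        calc N 0 < N (m + 1) := hN (Nat.succ_pos m)
          _ = N' n := hm
    choose next hsub hlt bfun hb using step
    let chain : ℕ → {g : ℕ → ℕ // StrictMono g} := fun i => Nat.rec ⟨M, hM⟩ (fun _ N => next N) i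
    have chain_succ : ∀ i, chain (i + 1) = next (chain i) := fun _ => rfl
    have chain_sub : ∀ i j, i ≤ j → Set.range (chain j).1 ⊆ Set.range (chain i).1 := by
      intro i j hij
      induction j, hij using Nat.le_induction with
      | base => exact subset_rfl
      | succ j hij ihh => exact (chain_succ j ▸ hsub (chain j)).trans ihh
    set a : ℕ → ℕ := fun i => (chain i).1 0 with ha
    set bb : ℕ → Bool := fun i => bfun (chain i) with hbb
    have a_mem : ∀ i, a i ∈ Set.range (chain i).1 := fun i => ⟨0, rfl⟩
    have a_lt : ∀ i x, x ∈ Set.range (chain (i + 1)).1 → a i < x := by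
      rintro i x ⟨n, rfl⟩
      exact chain_succ i ▸ hlt (chain i) n
    have haM : StrictMono a := strictMono_nat_of_lt_succ fun i => a_lt i _ (a_mem (i + 1))
    have a_range : ∀ i, a i ∈ Set.range M := fun i => chain_sub 0 i (Nat.zero_le i) (a_mem i)
    have homog : ∀ i (s : Finset ℕ), ↑s ⊆ Set.range (chain (i + 1)).1 → s.card = r →
        c (insert (a i) s) = bb i := by
      intro i s hs hcard
      have := hb (chain i) s (by rw [← chain_succ i]; exact hs) hcard
      exact this
    have pig : ∃ b : Bool, {i | bb i = b}.Infinite := by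
      by_contra hcon
      push_neg at hcon
      have h1 : {i | bb i = true}.Finite := hcon true
      have h2 : {i | bb i = false}.Finite := hcon false
      refine Set.infinite_univ (α := ℕ) ?_
      refine Set.Finite.subset (h1.union h2) fun i _ => ?_
      cases hbi : bb i
      · exact Or.inr hbi
      · exact Or.inl hbi
    obtain ⟨b, hbI⟩ := pig
    have hι : StrictMono (Nat.nth (fun i => bb i = b)) := Nat.nth_strictMono hbI
    have hιb : ∀ k, bb (Nat.nth (fun i => bb i = b) k) = b := fun k =>
      Nat.nth_mem_of_infinite hbI k
    set ι := Nat.nth (fun i => bb i = b) with hιdef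
    refine ⟨a ∘ ι, haM.comp hι, ?_, b, ?_⟩
    · rintro x ⟨k, rfl⟩; exact a_range (ι k)
    · intro s hs hcard
      have hne : s.Nonempty := by rw [← Finset.card_pos, hcard]; omega
      obtain ⟨k, hk'c⟩ := hs (s.min'_mem hne)
      set x := s.min' hne with hx
      have hk : a (ι k) = x := hk'c
      set t := s.erase x with ht
      have hxt : x ∉ t := Finset.notMem_erase _ _
      have htcard : t.card = r := by
        rw [ht, Finset.card_erase_of_mem (s.min'_mem hne), hcard]
        omega
      have htsub : ↑t ⊆ Set.range (chain (ι k + 1)).1 := by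
        intro y hy
        have hys : y ∈ s := Finset.mem_of_mem_erase hy
        obtain ⟨k', hk'c2⟩ := hs hys
        have hk' : a (ι k') = y := hk'c2
        have hxy : x < y := by
          have hle := s.min'_le y hys
          have hne' : y ≠ x := Finset.ne_of_mem_erase hy
          omega
        have hkk' : ι k < ι k' := by
          have : a (ι k) < a (ι k') := by rw [hk, hk']; exact hxy
          exact haM.lt_iff_lt.mp this
        have : a (ι k') ∈ Set.range (chain (ι k')).1 := a_mem _
        rw [hk'] at this
        exact chain_sub (ι k + 1) (ι k') hkk' this
      have := homog (ι k) t htsub htcard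
      rw [hιb k] at this
      have hins : insert (a (ι k)) t = s := by
        rw [hk, ht]
        exact Finset.insert_erase (s.min'_mem hne)
      rwa [hins] at this


variable {E : Type*} [NormedAddCommGroup E] [NormedSpace ℝ E]

set_option linter.unusedSectionVars false


lemma bound_of_good {z : ℕ → E} {C ε : ℝ} (hC : ∀ n, ‖z n‖ ≤ C) (hε : 0 ≤ ε)
    {σ : ℕ → ℕ} {n₀ : ℕ} (hn₀ : 0 < n₀)
    (hgood : ∀ s : Finset ℕ, ↑s ⊆ Set.range σ → s.card = n₀ →
      ‖∑ i ∈ s, z i‖ ≤ ε * s.card)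
    {ρ : ℕ → ℕ} (hρ : StrictMono ρ) (hrange : Set.range ρ ⊆ Set.range σ) (N : ℕ) :
    ‖∑ k ∈ Finset.range N, z (ρ k)‖ ≤ ε * N + n₀ * C := by
  have hC0 : 0 ≤ C := le_trans (norm_nonneg _) (hC 0)
  have block : ∀ m : ℕ, ‖∑ k ∈ Finset.Ico m (m + n₀), z (ρ k)‖ ≤ ε * n₀ := by
    intro m
    set s : Finset ℕ := (Finset.Ico m (m + n₀)).image ρ with hs
    have hcard : s.card = n₀ := by
      rw [hs, Finset.card_image_of_injective _ hρ.injective, Nat.card_Ico]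
      omega
    have hsum : ∑ i ∈ s, z i = ∑ k ∈ Finset.Ico m (m + n₀), z (ρ k) := by
      rw [hs, Finset.sum_image (fun x _ y _ h => hρ.injective h)]
    have hsub : ↑s ⊆ Set.range σ := by
      intro x hx
      rw [hs] at hx
      simp only [Finset.coe_image, Set.mem_image] at hx
      obtain ⟨k, _, rfl⟩ := hx
      exact hrange ⟨k, rfl⟩
    have h := hgood s hsub hcard
    rw [hsum, hcard] at h
    exact h
  have mult : ∀ q : ℕ, ‖∑ k ∈ Finset.range (q * n₀), z (ρ k)‖ ≤ ε * ((q * n₀ : ℕ) : ℝ) := by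
    intro q
    induction q with
    | zero => simp
    | succ q ihq =>
      have h := Finset.sum_Ico_consecutive (fun k => z (ρ k)) (Nat.zero_le (q * n₀))
        (Nat.le_add_right (q * n₀) n₀)
      have hsplit : ∑ k ∈ Finset.range ((q + 1) * n₀), z (ρ k)
          = ∑ k ∈ Finset.range (q * n₀), z (ρ k)
            + ∑ k ∈ Finset.Ico (q * n₀) (q * n₀ + n₀), z (ρ k) := by
        rw [Nat.succ_mul]
        simp only [Finset.range_eq_Ico]
        exact h.symm
      rw [hsplit]
      calc ‖_ + _‖ ≤ ‖∑ k ∈ Finset.range (q * n₀), z (ρ k)‖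
            + ‖∑ k ∈ Finset.Ico (q * n₀) (q * n₀ + n₀), z (ρ k)‖ := norm_add_le _ _
        _ ≤ ε * ((q * n₀ : ℕ) : ℝ) + ε * n₀ := add_le_add ihq (block _)
        _ = ε * (((q + 1) * n₀ : ℕ) : ℝ) := by push_cast [Nat.succ_mul]; ring
  set q := N / n₀ with hq
  have hle : q * n₀ ≤ N := Nat.div_mul_le_self N n₀
  have hsplit : ∑ k ∈ Finset.range N, z (ρ k)
      = ∑ k ∈ Finset.range (q * n₀), z (ρ k) + ∑ k ∈ Finset.Ico (q * n₀) N, z (ρ k) := by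
    have h := Finset.sum_Ico_consecutive (fun k => z (ρ k)) (Nat.zero_le (q * n₀)) hle
    simp only [Finset.range_eq_Ico]
    exact h.symm
  have htail : ‖∑ k ∈ Finset.Ico (q * n₀) N, z (ρ k)‖ ≤ (n₀ : ℝ) * C := by
    calc ‖∑ k ∈ Finset.Ico (q * n₀) N, z (ρ k)‖
        ≤ ∑ k ∈ Finset.Ico (q * n₀) N, ‖z (ρ k)‖ := norm_sum_le _ _
      _ ≤ ∑ _k ∈ Finset.Ico (q * n₀) N, C := Finset.sum_le_sum fun k _ => hC _
      _ = ((N - q * n₀ : ℕ) : ℝ) * C := by rw [Finset.sum_const, Nat.card_Ico, nsmul_eq_mul]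
      _ ≤ (n₀ : ℝ) * C := by
          apply mul_le_mul_of_nonneg_right _ hC0
          have h2 : N = N % n₀ + q * n₀ := by
            rw [hq, Nat.mul_comm]
            exact ((Nat.add_comm _ _).trans (Nat.div_add_mod N n₀)).symm
          have hlt : N - q * n₀ < n₀ := by
            rw [Nat.sub_eq_of_eq_add h2]
            exact Nat.mod_lt N hn₀
          exact_mod_cast hlt.le
  calc ‖∑ k ∈ Finset.range N, z (ρ k)‖
      ≤ ‖∑ k ∈ Finset.range (q * n₀), z (ρ k)‖ + ‖∑ k ∈ Finset.Ico (q * n₀) N, z (ρ k)‖ := by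
        rw [hsplit]; exact norm_add_le _ _
    _ ≤ ε * ((q * n₀ : ℕ) : ℝ) + n₀ * C := add_le_add (mult q) htail
    _ ≤ ε * N + n₀ * C := by
        have hcast : ((q * n₀ : ℕ) : ℝ) ≤ (N : ℝ) := Nat.cast_le.mpr hle
        have := mul_le_mul_of_nonneg_left hcast hε
        linarith


/-- Given a chain built by iterating a range-decreasing choice function, ranges are nested. -/
lemma chain_nested (chain : ℕ → {g : ℕ → ℕ // StrictMono g})
    (h : ∀ i, Set.range (chain (i + 1)).1 ⊆ Set.range (chain i).1) :
    ∀ i j, i ≤ j → Set.range (chain j).1 ⊆ Set.range (chain i).1 := by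
  intro i j hij
  induction j, hij using Nat.le_induction with
  | base => exact subset_rfl
  | succ j hij ihh => exact (h j).trans ihh

/-- diagonal of a nested chain is strictly monotone and tail-absorbed. -/
lemma chain_diag (chain : ℕ → {g : ℕ → ℕ // StrictMono g})
    (h : ∀ i, Set.range (chain (i + 1)).1 ⊆ Set.range (chain i).1) :
    StrictMono (fun j => (chain j).1 j) ∧
      ∀ i j, i ≤ j → (chain j).1 j ∈ Set.range (chain i).1 := by
  constructor
  · apply strictMono_nat_of_lt_succ
    intro j
    obtain ⟨e, he, hfe⟩ := strictMono_range_factor (chain (j + 1)).2 (chain j).2 (h j)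
    have h1 : (chain (j + 1)).1 (j + 1) = (chain j).1 (e (j + 1)) := by rw [hfe]; rfl
    have h2 : j + 1 ≤ e (j + 1) := he.le_apply
    calc (chain j).1 j < (chain j).1 (j + 1) := (chain j).2 (Nat.lt_succ_self j)
      _ ≤ (chain j).1 (e (j + 1)) := (chain j).2.monotone h2
      _ = (chain (j + 1)).1 (j + 1) := h1.symm
  · intro i j hij
    exact chain_nested chain h i j hij ⟨j, rfl⟩

/-- For every `ε > 0` we can pass to a subsequence on which, for some fixed size `n₀`,
all `n₀`-element subsets have `ε`-small sums. -/
lemma exists_good_subseq {z : ℕ → E}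
    (Hz : ∀ σ : ℕ → ℕ, StrictMono σ → ∃ τ : ℕ → ℕ, StrictMono τ ∧
      Tendsto (fun N : ℕ => ‖(N : ℝ)⁻¹ • ∑ k ∈ Finset.range N, z (σ (τ k))‖) atTop (𝓝 0))
    {ε : ℝ} (hε : 0 < ε) {σ₀ : ℕ → ℕ} (hσ₀ : StrictMono σ₀) :
    ∃ σ : ℕ → ℕ, StrictMono σ ∧ Set.range σ ⊆ Set.range σ₀ ∧ ∃ n₀ : ℕ, 0 < n₀ ∧
      ∀ s : Finset ℕ, ↑s ⊆ Set.range σ → s.card = n₀ → ‖∑ i ∈ s, z i‖ ≤ ε * s.card := by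
  classical
  set c : Finset ℕ → Bool := fun s => decide (‖∑ i ∈ s, z i‖ ≤ ε * s.card) with hc
  have R : ∀ (j : ℕ) (N : {g : ℕ → ℕ // StrictMono g}), ∃ N' : {g : ℕ → ℕ // StrictMono g},
      Set.range N'.1 ⊆ Set.range N.1 ∧ ∃ b : Bool, ∀ s : Finset ℕ, ↑s ⊆ Set.range N'.1 →
        s.card = j + 1 → c s = b := by
    rintro j ⟨N, hN⟩
    obtain ⟨M', h1, h2, b, hb⟩ := ramsey (j + 1) c N hN
    exact ⟨⟨M', h1⟩, h2, b, hb⟩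
  choose nextf hsub bfun hb using R
  set chain : ℕ → {g : ℕ → ℕ // StrictMono g} :=
    fun j => Nat.rec ⟨σ₀, hσ₀⟩ (fun j N => nextf j N) j with hchain
  have chain_succ : ∀ j, chain (j + 1) = nextf j (chain j) := fun _ => rfl
  have hnest : ∀ i, Set.range (chain (i + 1)).1 ⊆ Set.range (chain i).1 := by
    intro i; rw [chain_succ i]; exact hsub i (chain i)
  by_cases hgoodcase : ∃ j : ℕ, bfun j (chain j) = true
  · obtain ⟨j, hj⟩ := hgoodcase
    refine ⟨(chain (j + 1)).1, (chain (j + 1)).2,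
      chain_nested chain hnest 0 (j + 1) (Nat.zero_le _), j + 1, Nat.succ_pos j, ?_⟩
    intro s hs hcard
    have h1 : c s = bfun j (chain j) := by
      have := hb j (chain j) s (by rw [← chain_succ j]; exact hs) hcard
      exact this
    rw [hj] at h1
    have := of_decide_eq_true h1
    exact this
  · push_neg at hgoodcase
    have hbad : ∀ j, bfun j (chain j) = false := by
      intro j
      cases hx : bfun j (chain j)
      · rfl
      · exact absurd hx (hgoodcase j)
    exfalso
    obtain ⟨hd, hdmem⟩ := chain_diag chain hnest
    set d : ℕ → ℕ := fun j => (chain j).1 j with hddef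
    obtain ⟨τ, hτ, hces⟩ := Hz d hd
    have hε3 : (0 : ℝ) < ε / 3 := by linarith
    obtain ⟨K, hK⟩ := (Metric.tendsto_atTop.mp hces) (ε / 3) hε3
    have hKle : ∀ N ≥ K, ‖(N : ℝ)⁻¹ • ∑ k ∈ Finset.range N, z (d (τ k))‖ ≤ ε / 3 := by
      intro N hN
      have := hK N hN
      rw [Real.dist_eq, sub_zero, abs_of_nonneg (norm_nonneg _)] at this
      exact this.le
    set a : ℕ := max K 1 with hadef
    have ha1 : 1 ≤ a := le_max_right _ _
    have haK : K ≤ a := le_max_left _ _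
    -- the block s of size a
    set p : ℕ → ℕ := fun k => d (τ k) with hpdef
    have hp : StrictMono p := hd.comp hτ
    set s : Finset ℕ := (Finset.Ico a (2 * a)).image p with hs
    have hcard : s.card = a := by
      rw [hs, Finset.card_image_of_injective _ hp.injective, Nat.card_Ico]
      omega
    have hssub : ↑s ⊆ Set.range (chain a).1 := by
      intro x hx
      rw [hs] at hx
      simp only [Finset.coe_image, Set.mem_image, Finset.coe_Ico, Set.mem_Ico] at hx
      obtain ⟨k, ⟨hk1, _⟩, rfl⟩ := hx
      have : a ≤ τ k := le_trans hk1 hτ.le_apply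
      exact hdmem a (τ k) this
    -- norm estimate for partial sums along p
    have hsumN : ∀ N ≥ K, 1 ≤ N → ‖∑ k ∈ Finset.range N, z (p k)‖ ≤ (N : ℝ) * (ε / 3) := by
      intro N hNK hN1
      have h0 : (0 : ℝ) < N := by exact_mod_cast hN1
      have := hKle N hNK
      rw [norm_smul, norm_inv, Real.norm_natCast] at this
      calc ‖∑ k ∈ Finset.range N, z (p k)‖
          = (N : ℝ) * ((N : ℝ)⁻¹ * ‖∑ k ∈ Finset.range N, z (p k)‖) := by
            field_simp
        _ ≤ (N : ℝ) * (ε / 3) := by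
            apply mul_le_mul_of_nonneg_left _ (le_of_lt h0)
            exact this
    have hblock : ‖∑ i ∈ s, z i‖ ≤ ε * a := by
      have hsum : ∑ i ∈ s, z i = ∑ k ∈ Finset.Ico a (2 * a), z (p k) := by
        rw [hs, Finset.sum_image (fun x _ y _ h => hp.injective h)]
      have hsplit : ∑ k ∈ Finset.Ico a (2 * a), z (p k)
          = ∑ k ∈ Finset.range (2 * a), z (p k) - ∑ k ∈ Finset.range a, z (p k) := by
        have h := Finset.sum_Ico_consecutive (fun k => z (p k)) (Nat.zero_le a)
          (by omega : a ≤ 2 * a)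
        simp only [Finset.range_eq_Ico]
        rw [← h]
        abel
      have h2a : ‖∑ k ∈ Finset.range (2 * a), z (p k)‖ ≤ ((2 * a : ℕ) : ℝ) * (ε / 3) :=
        hsumN (2 * a) (by omega) (by omega)
      have h1a : ‖∑ k ∈ Finset.range a, z (p k)‖ ≤ ((a : ℕ) : ℝ) * (ε / 3) :=
        hsumN a haK ha1
      rw [hsum, hsplit]
      calc ‖_ - _‖ ≤ ‖∑ k ∈ Finset.range (2 * a), z (p k)‖
            + ‖∑ k ∈ Finset.range a, z (p k)‖ := norm_sub_le _ _
        _ ≤ ((2 * a : ℕ) : ℝ) * (ε / 3) + (a : ℝ) * (ε / 3) := add_le_add h2a h1a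
        _ = ε * a := by push_cast; ring
    -- contradiction with badness at level a
    obtain ⟨a', ha'⟩ : ∃ a', a = a' + 1 := ⟨a - 1, by omega⟩
    have hcs : c s = bfun a' (chain a') := by
      apply hb a' (chain a') s _ (by rw [hcard, ha'])
      rw [← chain_succ a', ← ha']
      exact hssub
    rw [hbad a'] at hcs
    have : ¬ (‖∑ i ∈ s, z i‖ ≤ ε * s.card) := of_decide_eq_false hcs
    apply this
    rw [hcard]
    exact hblock


/-- Main combinatorial lemma (Erdős–Magidor style uniformization): if every subsequence of
`z` admits a further subsequence whose Cesàro means are norm-null, then some subsequence of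
`z` has the property that *all* of its further subsequences have norm-null Cesàro means. -/
lemma main_comb {z : ℕ → E} {C : ℝ} (hC : ∀ n, ‖z n‖ ≤ C)
    (Hz : ∀ σ : ℕ → ℕ, StrictMono σ → ∃ τ : ℕ → ℕ, StrictMono τ ∧
      Tendsto (fun N : ℕ => ‖(N : ℝ)⁻¹ • ∑ k ∈ Finset.range N, z (σ (τ k))‖) atTop (𝓝 0)) :
    ∃ σ : ℕ → ℕ, StrictMono σ ∧ ∀ τ : ℕ → ℕ, StrictMono τ →
      Tendsto (fun N : ℕ => ‖(N : ℝ)⁻¹ • ∑ k ∈ Finset.range N, z (σ (τ k))‖) atTop (𝓝 0) := by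
  have hC0 : 0 ≤ C := le_trans (norm_nonneg _) (hC 0)
  -- iterate `exists_good_subseq` with ε = 1/(j+1)
  have R : ∀ (j : ℕ) (σp : {g : ℕ → ℕ // StrictMono g}), ∃ σ' : {g : ℕ → ℕ // StrictMono g},
      Set.range σ'.1 ⊆ Set.range σp.1 ∧ ∃ n₀ : ℕ, 0 < n₀ ∧
        ∀ s : Finset ℕ, ↑s ⊆ Set.range σ'.1 → s.card = n₀ →
          ‖∑ i ∈ s, z i‖ ≤ (1 / (j + 1 : ℝ)) * s.card := by
    rintro j ⟨σp, hσp⟩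
    have hpos : (0 : ℝ) < 1 / (j + 1 : ℝ) := by positivity
    obtain ⟨σ', h1, h2, n₀, h3, h4⟩ := exists_good_subseq Hz hpos hσp
    exact ⟨⟨σ', h1⟩, h2, n₀, h3, h4⟩
  choose nextf hsub n₀f hn₀pos hgood using R
  set chain : ℕ → {g : ℕ → ℕ // StrictMono g} :=
    fun j => Nat.rec ⟨id, strictMono_id⟩ (fun j N => nextf j N) j with hchain
  have chain_succ : ∀ j, chain (j + 1) = nextf j (chain j) := fun _ => rfl
  have hnest : ∀ i, Set.range (chain (i + 1)).1 ⊆ Set.range (chain i).1 := by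
    intro i; rw [chain_succ i]; exact hsub i (chain i)
  obtain ⟨hd, hdmem⟩ := chain_diag chain hnest
  set d : ℕ → ℕ := fun j => (chain j).1 j with hddef
  refine ⟨d, hd, ?_⟩
  intro τ hτ
  rw [NormedAddCommGroup.tendsto_nhds_zero]
  intro ε' hε'
  -- choose j with 1/(j+1) < ε'/2
  obtain ⟨j, hj⟩ := exists_nat_one_div_lt (show (0 : ℝ) < ε' / 2 by linarith)
  set m : ℕ := j + 1 with hm
  set n₀ : ℕ := n₀f j (chain j) with hn₀
  have hmR : ((m : ℕ) : ℝ) = (j : ℝ) + 1 := by rw [hm]; push_cast; ring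
  -- the subsequence (shifted by m) lands in range (chain (j+1))
  set ρ' : ℕ → ℕ := fun k => d (τ (m + k)) with hρ'
  have hρ'mono : StrictMono ρ' := by
    intro x y hxy
    exact hd (hτ (by omega))
  have hρ'range : Set.range ρ' ⊆ Set.range (chain (j + 1)).1 := by
    rintro x ⟨k, rfl⟩
    have h1 : j + 1 ≤ τ (m + k) := le_trans (by omega) hτ.le_apply
    exact hdmem (j + 1) (τ (m + k)) h1
  have hgood' : ∀ s : Finset ℕ, ↑s ⊆ Set.range (chain (j + 1)).1 → s.card = n₀ →
      ‖∑ i ∈ s, z i‖ ≤ (1 / (m : ℝ)) * s.card := by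
    intro s h1 h2
    have := hgood j (chain j) s (by rw [← chain_succ j]; exact h1) h2
    rw [hmR]
    exact this
  have hbound : ∀ N : ℕ, ‖∑ k ∈ Finset.range N, z (ρ' k)‖ ≤ (1 / (m : ℝ)) * N + n₀ * C := by
    intro N
    exact bound_of_good hC (by positivity) (hn₀pos j (chain j)) hgood' hρ'mono hρ'range N
  -- full partial sums
  have hfull : ∀ N : ℕ, m ≤ N →
      ‖∑ k ∈ Finset.range N, z (d (τ k))‖ ≤ (1 / (m : ℝ)) * N + (m * C + n₀ * C) := by
    intro N hN
    have hsplit : ∑ k ∈ Finset.range N, z (d (τ k))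
        = ∑ k ∈ Finset.range m, z (d (τ k)) + ∑ k ∈ Finset.Ico m N, z (d (τ k)) := by
      have h := Finset.sum_Ico_consecutive (fun k => z (d (τ k))) (Nat.zero_le m) hN
      simp only [Finset.range_eq_Ico]
      exact h.symm
    have hhead : ‖∑ k ∈ Finset.range m, z (d (τ k))‖ ≤ (m : ℝ) * C := by
      calc ‖∑ k ∈ Finset.range m, z (d (τ k))‖ ≤ ∑ k ∈ Finset.range m, ‖z (d (τ k))‖ :=
            norm_sum_le _ _
        _ ≤ ∑ _k ∈ Finset.range m, C := Finset.sum_le_sum fun k _ => hC _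
        _ = (m : ℝ) * C := by rw [Finset.sum_const, Finset.card_range, nsmul_eq_mul]
    have htail : ‖∑ k ∈ Finset.Ico m N, z (d (τ k))‖ ≤ (1 / (m : ℝ)) * N + n₀ * C := by
      have hshift : ∑ k ∈ Finset.Ico m N, z (d (τ k))
          = ∑ k ∈ Finset.range (N - m), z (ρ' k) := by
        rw [Finset.sum_Ico_eq_sum_range]
      rw [hshift]
      calc ‖∑ k ∈ Finset.range (N - m), z (ρ' k)‖
          ≤ (1 / (m : ℝ)) * ((N - m : ℕ) : ℝ) + n₀ * C := hbound (N - m)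
        _ ≤ (1 / (m : ℝ)) * N + n₀ * C := by
            have h1 : ((N - m : ℕ) : ℝ) ≤ (N : ℝ) := by
              exact_mod_cast Nat.sub_le N m
            have h2 : (0 : ℝ) ≤ 1 / (m : ℝ) := by positivity
            nlinarith
    rw [hsplit]
    calc ‖_ + _‖ ≤ ‖∑ k ∈ Finset.range m, z (d (τ k))‖
          + ‖∑ k ∈ Finset.Ico m N, z (d (τ k))‖ := norm_add_le _ _
      _ ≤ (m : ℝ) * C + ((1 / (m : ℝ)) * N + n₀ * C) := add_le_add hhead htail
      _ = (1 / (m : ℝ)) * N + (m * C + n₀ * C) := by ring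
  -- finish: eventually the Cesàro mean is < ε'
  have htend : Tendsto (fun N : ℕ => ((m : ℝ) * C + n₀ * C) / N) atTop (𝓝 0) :=
    tendsto_const_div_atTop_nhds_zero_nat _
  have hev2 : ∀ᶠ N : ℕ in atTop, ((m : ℝ) * C + n₀ * C) / N < ε' / 2 :=
    htend.eventually (eventually_lt_nhds (by linarith : (0 : ℝ) < ε' / 2))
  have hjm : 1 / ((m : ℕ) : ℝ) < ε' / 2 := by rw [hmR]; exact hj
  filter_upwards [hev2, eventually_ge_atTop m, eventually_ge_atTop 1] with N h2 hNm hN1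
  have hNpos : (0 : ℝ) < (N : ℝ) := by exact_mod_cast hN1
  rw [norm_norm, norm_smul, norm_inv, Real.norm_natCast]
  have h3 := hfull N hNm
  calc (N : ℝ)⁻¹ * ‖∑ k ∈ Finset.range N, z (d (τ k))‖
      ≤ (N : ℝ)⁻¹ * ((1 / (m : ℝ)) * N + ((m : ℝ) * C + n₀ * C)) := by
        apply mul_le_mul_of_nonneg_left h3 (by positivity)
    _ = 1 / (m : ℝ) * ((N : ℝ) * (N : ℝ)⁻¹) + ((m : ℝ) * C + n₀ * C) / N := by
        rw [div_eq_mul_inv (((m : ℕ) : ℝ) * C + n₀ * C)]; ring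
    _ = 1 / (m : ℝ) + ((m : ℝ) * C + n₀ * C) / N := by
        rw [mul_inv_cancel₀ (ne_of_gt hNpos), mul_one]
    _ < ε' / 2 + ε' / 2 := add_lt_add hjm h2
    _ = ε' := by ring


end EMProof
end EMProof

/-- If `T : Y → X` is an operator whose adjoint `T* : X* → Y*` is Banach-Saks (every
bounded sequence in `X*` has a subsequence whose images under `T*` are norm-Cesàro
convergent), then `X` has property (μ^s_{{T(B_Y)}}). -/
theorem stmt6 {X Y : Type*} [NormedAddCommGroup X] [NormedSpace ℝ X] [CompleteSpace X]
    [NormedAddCommGroup Y] [NormedSpace ℝ Y] [CompleteSpace Y]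
    (T : Y →L[ℝ] X)
    (hT : ∀ f : ℕ → StrongDual ℝ X, Bornology.IsBounded (Set.range f) →
      ∃ φ : ℕ → ℕ, StrictMono φ ∧ ∃ g : StrongDual ℝ Y,
        Tendsto (fun N : ℕ => (N : ℝ)⁻¹ • ∑ k ∈ Finset.range N, (f (φ k)).comp T)
          atTop (𝓝 g)) :
    PropMuSFam X {T '' Metric.closedBall (0 : Y) 1} := by
  intro f hf
  -- the sequence is norm-bounded (Banach–Steinhaus)
  obtain ⟨Cf, hCf⟩ : ∃ C, ∀ n, ‖f n‖ ≤ C := by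
    have hb : ∀ x : X, ∃ C, ∀ n : ℕ, ‖f n x‖ ≤ C := by
      intro x
      have h0 : Tendsto (fun n => ‖f n x‖) atTop (𝓝 0) := by
        simpa using (hf x).norm
      obtain ⟨C, hC⟩ := h0.bddAbove_range
      exact ⟨C, fun n => hC ⟨n, rfl⟩⟩
    obtain ⟨C', hC'⟩ := banach_steinhaus hb
    exact ⟨C', hC'⟩
  set z : ℕ → StrongDual ℝ Y := fun n => (f n).comp T with hz
  have hzC : ∀ n, ‖z n‖ ≤ Cf * ‖T‖ := by
    intro n
    calc ‖(f n).comp T‖ ≤ ‖f n‖ * ‖T‖ := ContinuousLinearMap.opNorm_comp_le _ _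
      _ ≤ Cf * ‖T‖ := by
          have := hCf n
          have hT0 : (0 : ℝ) ≤ ‖T‖ := norm_nonneg _
          nlinarith [norm_nonneg (f n)]
  -- key hypothesis for the combinatorial lemma
  have Hz : ∀ σ : ℕ → ℕ, StrictMono σ → ∃ τ : ℕ → ℕ, StrictMono τ ∧
      Tendsto (fun N : ℕ => ‖(N : ℝ)⁻¹ • ∑ k ∈ Finset.range N, z (σ (τ k))‖) atTop (𝓝 0) := by
    intro σ hσ
    have hbdd : Bornology.IsBounded (Set.range (fun n => f (σ n))) := by
      rw [Metric.isBounded_iff_subset_closedBall 0]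
      refine ⟨Cf, ?_⟩
      rintro x ⟨n, rfl⟩
      rw [Metric.mem_closedBall, dist_zero_right]
      exact hCf (σ n)
    obtain ⟨τ, hτ, g, htend⟩ := hT (fun n => f (σ n)) hbdd
    have hg0 : g = 0 := by
      ext y
      have heval : Tendsto (fun N : ℕ =>
          ((N : ℝ)⁻¹ • ∑ k ∈ Finset.range N, (f (σ (τ k))).comp T) y) atTop (𝓝 (g y)) :=
        ((ContinuousLinearMap.apply ℝ ℝ y).continuous.tendsto g).comp htend
      have hrw : ∀ N : ℕ, ((N : ℝ)⁻¹ • ∑ k ∈ Finset.range N, (f (σ (τ k))).comp T) y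
          = (N : ℝ)⁻¹ * ∑ k ∈ Finset.range N, f (σ (τ k)) (T y) := by
        intro N
        simp [ContinuousLinearMap.sum_apply, smul_eq_mul]
      rw [funext hrw] at heval
      have hnull : Tendsto (fun k => f (σ (τ k)) (T y)) atTop (𝓝 0) :=
        (hf (T y)).comp ((hσ.comp hτ).tendsto_atTop)
      have hces := hnull.cesaro
      have := tendsto_nhds_unique heval hces
      simpa using this.symm ▸ rfl
    refine ⟨τ, hτ, ?_⟩
    have := htend.norm
    rw [hg0, norm_zero] at this
    exact this
  obtain ⟨φ, hφ, hall⟩ := EMProof.main_comb hzC Hz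
  refine ⟨φ, hφ, ?_⟩
  intro ψ hψ A₀ hA₀
  rw [Set.mem_singleton_iff] at hA₀
  subst hA₀
  rw [Metric.tendstoUniformlyOn_iff]
  intro ε hε
  have hev : ∀ᶠ N : ℕ in atTop,
      ‖(N : ℝ)⁻¹ • ∑ k ∈ Finset.range N, z (φ (ψ k))‖ < ε :=
    (hall ψ hψ).eventually (eventually_lt_nhds hε)
  filter_upwards [hev] with N hN x hx
  obtain ⟨y, hy, rfl⟩ := hx
  have hy1 : ‖y‖ ≤ 1 := mem_closedBall_zero_iff.mp hy
  set A : StrongDual ℝ Y := (N : ℝ)⁻¹ • ∑ k ∈ Finset.range N, z (φ (ψ k)) with hA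
  have hAy : A y = (N : ℝ)⁻¹ • ∑ k ∈ Finset.range N, f (φ (ψ k)) (T y) := by
    rw [hA]
    simp only [ContinuousLinearMap.smul_apply, ContinuousLinearMap.sum_apply]
    congr 1
  have hle : ‖A y‖ ≤ ‖A‖ := by
    calc ‖A y‖ ≤ ‖A‖ * ‖y‖ := A.le_opNorm y
      _ ≤ ‖A‖ * 1 := by nlinarith [norm_nonneg A]
      _ = ‖A‖ := mul_one _
  rw [Pi.zero_apply, dist_zero_left]
  calc ‖(N : ℝ)⁻¹ • ∑ k ∈ Finset.range N, f (φ (ψ k)) (T y)‖ = ‖A y‖ := by rw [hAy]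
    _ ≤ ‖A‖ := hle
    _ < ε := hN
end
end

section
/- Every bounded sequence (x_n) in a Banach space X admits a subsequence (x_{n_j}) such that either all subsequences of (x_{n_j}) are Cesàro convergent (in norm) to the same limit, or no subsequence of (x_{n_j}) is Cesàro convergent. -/
open Filter Topology MeasureTheory Pointwise

noncomputable section

section EMnamespace

open Set
open scoped Classical

namespace EM

lemma exists_chain {S : Type*} (P : S → Prop) (R : ℕ → S → S → Prop) (s0 : S) (h0 : P s0)
    (hstep : ∀ i s, P s → ∃ t, P t ∧ R i s t) :
    ∃ f : ℕ → S, f 0 = s0 ∧ (∀ i, P (f i)) ∧ ∀ i, R i (f i) (f (i + 1)) := by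
  have hstep' : ∀ i (s : {x // P x}), ∃ t : {x // P x}, R i s.1 t.1 := by
    rintro i ⟨s, hs⟩
    obtain ⟨t, ht, hR⟩ := hstep i s hs
    exact ⟨⟨t, ht⟩, hR⟩
  choose g hg using hstep'
  let f : ℕ → {x // P x} := fun n => Nat.rec ⟨s0, h0⟩ (fun i x => g i x) n
  exact ⟨fun n => (f n).1, rfl, fun i => (f i).2, fun i => hg i (f i)⟩

lemma finset_subset_chain_of_mono {G : ℕ → Finset ℕ} (hmono : Monotone G) (e : Finset ℕ)
    (h : ∀ a ∈ e, ∃ j, a ∈ G j) : ∃ i, e ⊆ G i := by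
  induction e using Finset.induction_on with
  | empty => exact ⟨0, by simp⟩
  | @insert a e ha ih =>
    obtain ⟨i, hi⟩ := ih (fun b hb => h b (Finset.mem_insert_of_mem hb))
    obtain ⟨j, hj⟩ := h a (Finset.mem_insert_self a e)
    refine ⟨max i j, Finset.insert_subset (hmono (le_max_right i j) hj)
      (hi.trans (hmono (le_max_left i j)))⟩

def cyl (s : Finset ℕ) (A : Set ℕ) : Set (Set ℕ) :=
  {X | X.Infinite ∧ ↑s ⊆ X ∧ X ⊆ ↑s ∪ A}

def ok (s : Finset ℕ) (A : Set ℕ) : Prop :=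
  A.Infinite ∧ ∀ a ∈ s, ∀ b ∈ A, a < b

def Infs : Set (Set ℕ) := {X | X.Infinite}

def EOpen (S : Set (Set ℕ)) : Prop :=
  ∀ X ∈ S, ∃ t A, ok t A ∧ X ∈ cyl t A ∧ cyl t A ⊆ S

def CRstar (S : Set (Set ℕ)) : Prop :=
  ∀ s A, ok s A → ∃ B, B ⊆ A ∧ ok s B ∧ (cyl s B ⊆ S ∨ cyl s B ∩ S = ∅)

def Rnull (S : Set (Set ℕ)) : Prop :=
  ∀ s A, ok s A → ∃ B, B ⊆ A ∧ ok s B ∧ cyl s B ∩ S = ∅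

lemma ok_mono {s : Finset ℕ} {A B : Set ℕ} (h : ok s A) (hBA : B ⊆ A) (hB : B.Infinite) :
    ok s B := ⟨hB, fun a ha b hb => h.2 a ha b (hBA hb)⟩

lemma cyl_mono {s : Finset ℕ} {A B : Set ℕ} (hBA : B ⊆ A) : cyl s B ⊆ cyl s A :=
  fun X hX => ⟨hX.1, hX.2.1, hX.2.2.trans (Set.union_subset_union_right _ hBA)⟩

lemma cyl_subset_Infs {s : Finset ℕ} {A : Set ℕ} : cyl s A ⊆ Infs := fun _ hX => hX.1

lemma self_mem_cyl {s : Finset ℕ} {B : Set ℕ} (h : ok s B) : (↑s ∪ B) ∈ cyl s B :=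
  ⟨Set.Infinite.mono Set.subset_union_right h.1, Set.subset_union_left, subset_rfl⟩

section Galvin

variable (S : Set (Set ℕ))

def accepts (t : Finset ℕ) (C : Set ℕ) : Prop := cyl t C ⊆ S

def rejects (t : Finset ℕ) (C : Set ℕ) : Prop :=
  ∀ D, D ⊆ C → ok t D → ¬ accepts S t D

variable {S}

lemma accepts_mono {t : Finset ℕ} {C D : Set ℕ} (h : accepts S t C) (hDC : D ⊆ C) :
    accepts S t D := fun _ hX => h ((cyl_mono hDC) hX)

lemma rejects_mono {t : Finset ℕ} {C D : Set ℕ} (h : rejects S t C) (hDC : D ⊆ C) :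
    rejects S t D := fun E hE hok => h E (hE.trans hDC) hok

lemma not_accepts_of_rejects {t : Finset ℕ} {C : Set ℕ} (h : rejects S t C) (hok : ok t C) :
    ¬ accepts S t C := h C subset_rfl hok

lemma decide (t : Finset ℕ) (C : Set ℕ) (hok : ok t C) :
    ∃ D, D ⊆ C ∧ ok t D ∧ (accepts S t D ∨ rejects S t D) := by
  by_cases h : ∃ D, D ⊆ C ∧ ok t D ∧ accepts S t D
  · obtain ⟨D, h1, h2, h3⟩ := h
    exact ⟨D, h1, h2, Or.inl h3⟩
  · push_neg at h
    exact ⟨C, subset_rfl, hok, Or.inr fun D hD hokD hacc => h D hD hokD hacc⟩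

lemma decide_finset (ts : Finset (Finset ℕ)) (C : Set ℕ) (hC : C.Infinite)
    (hts : ∀ t ∈ ts, ∀ a ∈ t, ∀ b ∈ C, a < b) :
    ∃ D, D ⊆ C ∧ D.Infinite ∧ ∀ t ∈ ts, accepts S t D ∨ rejects S t D := by
  induction ts using Finset.induction_on generalizing C with
  | empty => exact ⟨C, subset_rfl, hC, by simp⟩
  | @insert t ts ht ih =>
    obtain ⟨D, hDC, hDinf, hD⟩ := ih C hC (fun t' ht' => hts t' (Finset.mem_insert_of_mem ht'))
    have hokt : ok t D := ⟨hDinf, fun a ha b hb =>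
      hts t (Finset.mem_insert_self t ts) a ha b (hDC hb)⟩
    obtain ⟨E, hED, hokE, hE⟩ := decide (S := S) t D hokt
    refine ⟨E, hED.trans hDC, hokE.1, fun t' ht' => ?_⟩
    rcases Finset.mem_insert.1 ht' with rfl | ht'
    · exact hE
    · rcases hD t' ht' with h | h
      · exact Or.inl (accepts_mono h hED)
      · exact Or.inr (rejects_mono h hED)

theorem eopen_crstar {S : Set (Set ℕ)} (hS : EOpen S) : CRstar S := by
  intro s A hsA
  obtain ⟨A', hA'A, hA'ok, hdec⟩ := decide (S := S) s A hsA
  rcases hdec with hacc | hrej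
  · exact ⟨A', hA'A, hA'ok, Or.inl hacc⟩
  -- First fusion chain: decide everything
  set P : Finset ℕ × Set ℕ → Prop := fun FD =>
    FD.2 ⊆ A' ∧ ↑FD.1 ⊆ A' ∧ FD.2.Infinite ∧ (∀ a ∈ FD.1, ∀ b ∈ FD.2, a < b) ∧
    ∀ e : Finset ℕ, e ⊆ FD.1 → (accepts S (s ∪ e) FD.2 ∨ rejects S (s ∪ e) FD.2) with hPdef
  set R : ℕ → Finset ℕ × Set ℕ → Finset ℕ × Set ℕ → Prop := fun _ FD FD' =>
    FD'.2 ⊆ FD.2 ∧ ∃ m, m ∈ FD.2 ∧ FD'.1 = insert m FD.1 ∧ ∀ b ∈ FD'.2, m < b with hRdef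
  have h0 : P (∅, A') := by
    refine ⟨subset_rfl, by simp, hA'ok.1, by simp, fun e he => ?_⟩
    rw [Finset.subset_empty] at he
    subst he
    rw [Finset.union_empty]
    exact Or.inr hrej
  have hstep : ∀ i FD, P FD → ∃ FD', P FD' ∧ R i FD FD' := by
    rintro i ⟨F, D⟩ ⟨hDA', hFA', hDinf, hFD, hdecs⟩
    obtain ⟨m, hm⟩ := hDinf.nonempty
    have hD1eq : D ∩ Ioi m = D \ Iic m := by
      rw [Set.diff_eq, Set.compl_Iic]
    have hD1inf : (D ∩ Ioi m).Infinite := by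
      rw [hD1eq]; exact hDinf.diff (Set.finite_Iic m)
    set ts : Finset (Finset ℕ) := (insert m F).powerset.image (fun e => s ∪ e) with hts
    have htsb : ∀ t ∈ ts, ∀ a ∈ t, ∀ b ∈ D ∩ Ioi m, a < b := by
      intro t ht a hat b hb
      obtain ⟨e, he, rfl⟩ := Finset.mem_image.1 ht
      rw [Finset.mem_powerset] at he
      rcases Finset.mem_union.1 hat with has | hae
      · exact hA'ok.2 a has b (hDA' hb.1)
      · rcases Finset.mem_insert.1 (he hae) with rfl | haF
        · exact hb.2
        · exact hFD a haF b hb.1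
    obtain ⟨D', hD'sub, hD'inf, hD'decs⟩ := decide_finset (S := S) ts (D ∩ Ioi m) hD1inf htsb
    refine ⟨(insert m F, D'), ⟨?_, ?_, hD'inf, ?_, ?_⟩, ?_, m, hm, rfl, ?_⟩
    · exact (hD'sub.trans Set.inter_subset_left).trans hDA'
    · rw [Finset.coe_insert]
      exact Set.insert_subset (hDA' hm) hFA'
    · intro a ha b hb
      rcases Finset.mem_insert.1 ha with rfl | haF
      · exact (hD'sub hb).2
      · exact hFD a haF b ((hD'sub hb).1)
    · intro e he
      exact hD'decs (s ∪ e) (Finset.mem_image.2 ⟨e, Finset.mem_powerset.2 he, rfl⟩)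
    · exact hD'sub.trans Set.inter_subset_left
    · exact fun b hb => (hD'sub hb).2
  obtain ⟨f, hf0, hfP, hfR⟩ := exists_chain P R (∅, A') h0 hstep
  set F : ℕ → Finset ℕ := fun i => (f i).1 with hFdef
  set D : ℕ → Set ℕ := fun i => (f i).2 with hDdef
  have hDsucc : ∀ i, D (i + 1) ⊆ D i := fun i => (hfR i).1
  have hDanti : Antitone D := antitone_nat_of_succ_le hDsucc
  obtain ⟨n, hn⟩ : ∃ n : ℕ → ℕ, ∀ i, n i ∈ D i ∧ F (i + 1) = insert (n i) (F i) ∧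
      ∀ b ∈ D (i + 1), n i < b := by
    have := fun i => (hfR i).2
    choose n h1 h2 h3 using this
    exact ⟨n, fun i => ⟨h1 i, h2 i, h3 i⟩⟩
  have hF0 : F 0 = ∅ := by show (f 0).1 = ∅; rw [hf0]
  have hFsucc : ∀ i, F i ⊆ F (i + 1) := fun i => by
    rw [(hn i).2.1]; exact Finset.subset_insert _ _
  have hFmono : Monotone F := monotone_nat_of_le_succ hFsucc
  have hDA' : ∀ i, D i ⊆ A' := fun i => (hfP i).1
  have hFltD : ∀ i, ∀ a ∈ F i, ∀ b ∈ D i, a < b := fun i => (hfP i).2.2.2.1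
  have hdec : ∀ i (e : Finset ℕ), e ⊆ F i →
      accepts S (s ∪ e) (D i) ∨ rejects S (s ∪ e) (D i) := fun i => (hfP i).2.2.2.2
  have hnstrict : StrictMono n := strictMono_nat_of_lt_succ fun i => (hn i).2.2 _ ((hn (i+1)).1)
  have hnF : ∀ i j, j < i → n j ∈ F i := by
    intro i j hji
    have : n j ∈ F (j + 1) := by rw [(hn j).2.1]; exact Finset.mem_insert_self _ _
    exact hFmono hji this
  have hFchr : ∀ i, ∀ a ∈ F i, ∃ j, j < i ∧ n j = a := by
    intro i
    induction i with
    | zero => rw [hF0]; simp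
    | succ i ih =>
      intro a ha
      rw [(hn i).2.1] at ha
      rcases Finset.mem_insert.1 ha with rfl | ha
      · exact ⟨i, Nat.lt_succ_self i, rfl⟩
      · obtain ⟨j, hj, hja⟩ := ih a ha
        exact ⟨j, hj.trans (Nat.lt_succ_self i), hja⟩
  set B' : Set ℕ := Set.range n with hB'def
  have hB'inf : B'.Infinite := Set.infinite_range_of_injective hnstrict.injective
  have hB'A' : B' ⊆ A' := by
    rintro _ ⟨j, rfl⟩
    exact hDA' j ((hn j).1)
  have memD_of_gt : ∀ i {x}, x ∈ B' → (∀ a ∈ F i, a < x) → x ∈ D i := by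
    rintro i x ⟨j, rfl⟩ hgt
    rcases lt_or_ge j i with hji | hij
    · exact absurd (hgt _ (hnF i j hji)) (lt_irrefl _)
    · exact hDanti hij ((hn j).1)
  have okse : ∀ i (e : Finset ℕ), e ⊆ F i → ok (s ∪ e) (D i) := by
    intro i e he
    refine ⟨(hfP i).2.2.1, fun a ha b hb => ?_⟩
    rcases Finset.mem_union.1 ha with has | hae
    · exact hA'ok.2 a has b (hDA' i hb)
    · exact hFltD i a (he hae) b hb
  -- stage lemma
  have stageOf : ∀ e : Finset ℕ, ↑e ⊆ B' → ∃ i, e ⊆ F i ∧ ∀ a ∈ F i, ∃ b ∈ e, a ≤ b := by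
    intro e he
    rcases e.eq_empty_or_nonempty with rfl | hne
    · exact ⟨0, by simp [hF0]⟩
    · obtain ⟨j₀, hj₀⟩ := he (e.max'_mem hne)
      refine ⟨j₀ + 1, ?_, ?_⟩
      · intro a ha
        obtain ⟨j, hj⟩ := he ha
        have : n j ≤ n j₀ := by rw [hj, hj₀]; exact e.le_max' a ha
        have hjj : j ≤ j₀ := hnstrict.le_iff_le.1 this
        rw [← hj]
        exact hnF (j₀ + 1) j (Nat.lt_succ_of_le hjj)
      · intro a ha
        obtain ⟨j, hji, hja⟩ := hFchr (j₀ + 1) a ha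
        refine ⟨e.max' hne, e.max'_mem hne, ?_⟩
        rw [← hja, ← hj₀]
        exact hnstrict.monotone (Nat.lt_succ_iff.1 hji)
  -- accepted / rejected for good
  set rejE : Finset ℕ → Prop := fun e => ∀ i, e ⊆ F i → rejects S (s ∪ e) (D i) with hrejEdef
  set accE : Finset ℕ → Prop := fun e => ∃ i, e ⊆ F i ∧ accepts S (s ∪ e) (D i) with haccEdef
  have dichotomy : ∀ e : Finset ℕ, ↑e ⊆ B' → accE e ∨ rejE e := by
    intro e he
    by_cases h : accE e
    · exact Or.inl h
    · refine Or.inr fun i hi => ?_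
      rcases hdec i e hi with hacc | hrej'
      · exact absurd ⟨i, hi, hacc⟩ h
      · exact hrej'
  have accE_all : ∀ e : Finset ℕ, accE e → ∀ j, e ⊆ F j → accepts S (s ∪ e) (D j) := by
    rintro e ⟨i, hi, hacc⟩ j hj
    rcases le_total i j with hij | hji
    · exact accepts_mono hacc (hDanti hij)
    · rcases hdec j e hj with h | h
      · exact h
      · exact absurd hacc
          (not_accepts_of_rejects (rejects_mono h (hDanti hji)) (okse i e hi))
  -- key finiteness lemma
  have keyfin : ∀ e : Finset ℕ, ↑e ⊆ B' → rejE e →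
      {x | x ∈ B' ∧ (∀ a ∈ s, a < x) ∧ (∀ a ∈ e, a < x) ∧ accE (insert x e)}.Finite := by
    intro e he hrejE
    by_contra hfin
    have hE0 : {x | x ∈ B' ∧ (∀ a ∈ s, a < x) ∧ (∀ a ∈ e, a < x) ∧
        accE (insert x e)}.Infinite := hfin
    obtain ⟨i₀, hei₀, hbd₀⟩ := stageOf e he
    set E1 : Set ℕ := {x | x ∈ B' ∧ (∀ a ∈ s, a < x) ∧ (∀ a ∈ e, a < x) ∧ accE (insert x e)} ∩
      {x | ∀ a ∈ F i₀, a < x} with hE1def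
    have hE1inf : E1.Infinite := by
      have hsmall : {x : ℕ | ¬ ∀ a ∈ F i₀, a < x}.Finite := by
        apply Set.Finite.subset (Set.finite_Iic ((F i₀).sup id))
        intro x hx
        push_neg at hx
        obtain ⟨a, ha, hax⟩ := hx
        exact le_trans hax (Finset.le_sup (f := id) ha)
      have : E1 = {x | x ∈ B' ∧ (∀ a ∈ s, a < x) ∧ (∀ a ∈ e, a < x) ∧ accE (insert x e)} \
          {x : ℕ | ¬ ∀ a ∈ F i₀, a < x} := by
        ext x; simp only [hE1def, Set.mem_inter_iff, Set.mem_diff, Set.mem_setOf_eq, not_not]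
      rw [this]
      exact hE0.diff hsmall
    have hE1D : E1 ⊆ D i₀ := fun x hx => memD_of_gt i₀ hx.1.1 hx.2
    have hokE1 : ok (s ∪ e) E1 := by
      refine ⟨hE1inf, fun a ha b hb => ?_⟩
      rcases Finset.mem_union.1 ha with has | hae
      · exact hb.1.2.1 a has
      · exact hb.1.2.2.1 a hae
    refine hrejE i₀ hei₀ E1 hE1D hokE1 ?_
    -- show accepts S (s ∪ e) E1
    intro X hX
    obtain ⟨hXinf, hseX, hXsub⟩ := hX
    set Z : Set ℕ := X \ ↑(s ∪ e) with hZdef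
    have hZE1 : Z ⊆ E1 := by
      intro x hx
      rcases hXsub hx.1 with h | h
      · exact absurd h hx.2
      · exact h
    have hZinf : Z.Infinite := hXinf.diff (s ∪ e).finite_toSet
    obtain ⟨x0, hx0⟩ := hZinf.nonempty
    set x : ℕ := sInf Z with hxdef
    have hxZ : x ∈ Z := Nat.sInf_mem ⟨x0, hx0⟩
    have hxE1 := hZE1 hxZ
    obtain ⟨j₁, hsub₁, hbd₁⟩ := stageOf (insert x e) (by
      rw [Finset.coe_insert]
      exact Set.insert_subset hxE1.1.1 he)
    have haccj₁ : accepts S (s ∪ insert x e) (D j₁) := accE_all _ hxE1.1.2.2.2 j₁ hsub₁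
    apply haccj₁
    refine ⟨hXinf, ?_, ?_⟩
    · rw [Finset.coe_union, Finset.coe_insert]
      refine Set.union_subset ?_ ?_
      · exact (Finset.coe_subset.2 Finset.subset_union_left).trans hseX
      · exact Set.insert_subset hxZ.1
          ((Finset.coe_subset.2 Finset.subset_union_right).trans hseX)
    · intro y hy
      by_cases hys : y ∈ (↑(s ∪ e) : Set ℕ)
      · left
        rw [Finset.coe_union] at hys ⊢
        rcases hys with h'' | h''
        · exact Set.mem_union_left _ h''
        · exact Set.mem_union_right _ (by
            rw [Finset.coe_insert]
            exact Set.mem_insert_of_mem _ h'')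
      · have hyZ : y ∈ Z := ⟨hy, hys⟩
        by_cases hyx : y = x
        · subst hyx
          left
          rw [Finset.coe_union, Finset.coe_insert]
          exact Set.mem_union_right _ (Set.mem_insert _ _)
        · right
          refine memD_of_gt j₁ ((hZE1 hyZ).1.1) ?_
          intro a ha
          obtain ⟨b, hb, hab⟩ := hbd₁ a ha
          have hxy : x < y := lt_of_le_of_ne (Nat.sInf_le hyZ) (Ne.symm hyx)
          have hbx : b ≤ x := by
            rcases Finset.mem_insert.1 hb with rfl | hb'
            · exact le_rfl
            · exact le_of_lt (hxE1.1.2.2.1 b hb')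
          exact lt_of_le_of_lt (hab.trans hbx) hxy
  -- Second fusion chain: all-rejecting subset
  set P2 : Finset ℕ → Prop := fun G => ↑G ⊆ B' ∧ ∀ e : Finset ℕ, e ⊆ G → rejE e with hP2def
  set R2 : ℕ → Finset ℕ → Finset ℕ → Prop := fun _ G G' =>
    ∃ m, G' = insert m G ∧ m ∈ B' ∧ (∀ a ∈ G, a < m) ∧ ∀ a ∈ s, a < m with hR2def
  have h02 : P2 ∅ := by
    refine ⟨by simp, fun e he => ?_⟩
    rw [Finset.subset_empty] at he
    subst he
    intro i _
    rw [Finset.union_empty]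
    exact rejects_mono hrej (hDA' i)
  have hstep2 : ∀ i G, P2 G → ∃ G', P2 G' ∧ R2 i G G' := by
    rintro i G ⟨hGB', hGrej⟩
    have hBad : ∀ e ∈ G.powerset,
        {x | x ∈ B' ∧ (∀ a ∈ s, a < x) ∧ (∀ a ∈ e, a < x) ∧ accE (insert x e)}.Finite := by
      intro e he
      exact keyfin e ((Finset.coe_subset.2 (Finset.mem_powerset.1 he)).trans hGB')
        (hGrej e (Finset.mem_powerset.1 he))
    have hBadfin : (⋃ e ∈ G.powerset,
        {x | x ∈ B' ∧ (∀ a ∈ s, a < x) ∧ (∀ a ∈ e, a < x) ∧ accE (insert x e)}).Finite :=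
      Set.Finite.biUnion (G.powerset.finite_toSet) hBad
    have hbnd : ({x : ℕ | ∃ a ∈ G, x ≤ a} ∪ {x : ℕ | ∃ a ∈ s, x ≤ a}).Finite := by
      apply Set.Finite.union
      · apply Set.Finite.subset (Set.finite_Iic (G.sup id))
        rintro x ⟨a, ha, hxa⟩
        exact hxa.trans (Finset.le_sup (f := id) ha)
      · apply Set.Finite.subset (Set.finite_Iic (s.sup id))
        rintro x ⟨a, ha, hxa⟩
        exact hxa.trans (Finset.le_sup (f := id) ha)
    obtain ⟨m, hmB', hmbad⟩ := (hB'inf.diff (hBadfin.union hbnd)).nonempty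
    rw [Set.mem_union, not_or] at hmbad
    obtain ⟨hmbad1, hmbad2⟩ := hmbad
    rw [Set.mem_union, not_or] at hmbad2
    have hmG : ∀ a ∈ G, a < m := by
      intro a ha
      by_contra hc
      exact hmbad2.1 ⟨a, ha, le_of_not_gt hc⟩
    have hms : ∀ a ∈ s, a < m := by
      intro a ha
      by_contra hc
      exact hmbad2.2 ⟨a, ha, le_of_not_gt hc⟩
    refine ⟨insert m G, ⟨?_, ?_⟩, m, rfl, hmB', hmG, hms⟩
    · rw [Finset.coe_insert]
      exact Set.insert_subset hmB' hGB'
    · intro e he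
      by_cases hme : m ∈ e
      · have he0 : e.erase m ⊆ G := by
          intro a ha
          rcases Finset.mem_insert.1 (he (Finset.mem_of_mem_erase ha)) with rfl | h
          · exact absurd rfl (Finset.ne_of_mem_erase ha)
          · exact h
        have heB' : ↑e ⊆ B' := by
          intro a ha
          rcases Finset.mem_insert.1 (he ha) with rfl | h
          · exact hmB'
          · exact hGB' h
        rcases dichotomy e heB' with hacc' | hrej'
        · exfalso
          apply hmbad1
          refine Set.mem_biUnion (Finset.mem_powerset.2 he0) ?_
          refine ⟨hmB', hms, ?_, ?_⟩
          · intro a ha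
            exact hmG a (he0 ha)
          · rwa [Finset.insert_erase hme]
        · exact hrej'
      · exact hGrej e (fun a ha => by
          rcases Finset.mem_insert.1 (he ha) with rfl | h
          · exact absurd ha hme
          · exact h)
  obtain ⟨g, hg0, hgP, hgR⟩ := exists_chain P2 R2 ∅ h02 hstep2
  obtain ⟨m, hm⟩ : ∃ m : ℕ → ℕ, ∀ i, g (i + 1) = insert (m i) (g i) ∧ m i ∈ B' ∧
      (∀ a ∈ g i, a < m i) ∧ ∀ a ∈ s, a < m i := by
    choose m h1 h2 h3 h4 using hgR
    exact ⟨m, fun i => ⟨h1 i, h2 i, h3 i, h4 i⟩⟩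
  have hgmono : Monotone g := monotone_nat_of_le_succ fun i => by
    rw [(hm i).1]; exact Finset.subset_insert _ _
  have hmg : ∀ i, m i ∈ g (i + 1) := fun i => by
    rw [(hm i).1]; exact Finset.mem_insert_self _ _
  have hmstrict : StrictMono m := strictMono_nat_of_lt_succ fun i =>
    (hm (i + 1)).2.2.1 _ (hmg i)
  set B'' : Set ℕ := Set.range m with hB''def
  have hB''inf : B''.Infinite := Set.infinite_range_of_injective hmstrict.injective
  have hB''B' : B'' ⊆ B' := by rintro _ ⟨i, rfl⟩; exact (hm i).2.1
  have hokB'' : ok s B'' := by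
    refine ⟨hB''inf, fun a ha b hb => ?_⟩
    obtain ⟨i, rfl⟩ := hb
    exact (hm i).2.2.2 a ha
  have hrejAll : ∀ e : Finset ℕ, ↑e ⊆ B'' → rejE e := by
    intro e he
    obtain ⟨i, hi⟩ := finset_subset_chain_of_mono hgmono e (by
      intro a ha
      obtain ⟨j, rfl⟩ := he ha
      exact ⟨j + 1, hmg j⟩)
    exact (hgP i).2 e hi
  refine ⟨B'', (hB''B'.trans hB'A').trans hA'A, hokB'', Or.inr ?_⟩
  rw [Set.eq_empty_iff_forall_notMem]
  rintro X ⟨hcyl, hXS⟩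
  obtain ⟨t, A₂, hokt, hXt, hsubS⟩ := hS X hXS
  set ν : ℕ := max (t.sup id + 1) (s.sup id + 1) with hνdef
  set t'set : Set ℕ := X ∩ Iio ν with ht'setdef
  have ht'fin : t'set.Finite := (Set.finite_Iio ν).inter_of_right X
  set t' : Finset ℕ := ht'fin.toFinset with ht'def
  have ht'coe : (↑t' : Set ℕ) = t'set := ht'fin.coe_toFinset
  have hsub_t : ↑t ⊆ t'set := by
    intro a ha
    refine ⟨hXt.2.1 ha, ?_⟩
    have : a ≤ t.sup id := Finset.le_sup (f := id) ha
    exact lt_of_le_of_lt this (lt_of_lt_of_le (Nat.lt_succ_self _) (le_max_left _ _))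
  have hs_t' : ↑s ⊆ t'set := by
    intro a ha
    refine ⟨hcyl.2.1 ha, ?_⟩
    have : a ≤ s.sup id := Finset.le_sup (f := id) ha
    exact lt_of_le_of_lt this (lt_of_lt_of_le (Nat.lt_succ_self _) (le_max_right _ _))
  have hst' : s ⊆ t' := by
    intro a ha
    rw [ht'def, Set.Finite.mem_toFinset]
    exact hs_t' ha
  set e : Finset ℕ := t' \ s with hedef
  have hset' : s ∪ e = t' := Finset.union_sdiff_of_subset hst'
  have heB'' : ↑e ⊆ B'' := by
    intro a ha
    have ha' := Finset.mem_sdiff.1 ha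
    have haX : a ∈ X := by
      have := ht'coe ▸ (Finset.mem_coe.2 ha'.1)
      exact this.1
    rcases hcyl.2.2 haX with h | h
    · exact absurd (Finset.mem_coe.1 h) ha'.2
    · exact h
  set D'' : Set ℕ := X \ Iio ν with hD''def
  have hD''inf : D''.Infinite := hcyl.1.diff (Set.finite_Iio ν)
  have hD''B'' : D'' ⊆ B'' := by
    rintro x ⟨hxX, hxν⟩
    rcases hcyl.2.2 hxX with h | h
    · exfalso
      apply hxν
      exact hs_t' h |>.2
    · exact h
  obtain ⟨j, hej, hbdj⟩ := stageOf e (heB''.trans hB''B')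
  have hD''Dj : D'' ⊆ D j := by
    intro x hx
    refine memD_of_gt j (hB''B' (hD''B'' hx)) ?_
    intro a ha
    obtain ⟨b, hb, hab⟩ := hbdj a ha
    have hbν : b < ν := by
      have : b ∈ t'set := ht'coe ▸ (Finset.mem_coe.2 (Finset.mem_sdiff.1 hb).1)
      exact this.2
    have : ν ≤ x := le_of_not_gt hx.2
    exact lt_of_le_of_lt hab (lt_of_lt_of_le hbν this)
  have hokD'' : ok (s ∪ e) D'' := by
    refine ⟨hD''inf, fun a ha b hb => ?_⟩
    have hbν : ν ≤ b := le_of_not_gt hb.2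
    rcases Finset.mem_union.1 ha with has | hae
    · have : a ≤ s.sup id := Finset.le_sup (f := id) has
      exact lt_of_lt_of_le (lt_of_le_of_lt this
        (lt_of_lt_of_le (Nat.lt_succ_self _) (le_max_right _ _))) hbν
    · have : a ∈ t'set := ht'coe ▸ (Finset.mem_coe.2 (Finset.mem_sdiff.1 hae).1)
      exact lt_of_lt_of_le this.2 hbν
  refine hrejAll e heB'' j hej D'' hD''Dj hokD'' ?_
  -- accepts S (s ∪ e) D''
  intro Y hY
  apply hsubS
  rw [hset'] at hY
  have hYX : Y ⊆ X := by
    intro y hy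
    rcases hY.2.2 hy with h | h
    · exact (ht'coe ▸ h).1
    · exact h.1
  refine ⟨hY.1, ?_, ?_⟩
  · intro a ha
    apply hY.2.1
    rw [Finset.mem_coe, ht'def, Set.Finite.mem_toFinset]
    exact hsub_t ha
  · exact hYX.trans hXt.2.2

end Galvin

section BPmach

lemma Rnull_mono {S T : Set (Set ℕ)} (hTS : T ⊆ S) (hS : Rnull S) : Rnull T := by
  intro s A hok
  obtain ⟨B, h1, h2, h3⟩ := hS s A hok
  refine ⟨B, h1, h2, ?_⟩
  rw [Set.eq_empty_iff_forall_notMem] at h3 ⊢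
  exact fun X hX => h3 X ⟨hX.1, hTS hX.2⟩

lemma Rnull_empty : Rnull (∅ : Set (Set ℕ)) := by
  intro s A hok
  exact ⟨A, subset_rfl, hok, by simp⟩

lemma Rnull_union {S T : Set (Set ℕ)} (hS : Rnull S) (hT : Rnull T) : Rnull (S ∪ T) := by
  intro s A hok
  obtain ⟨B1, hB1A, hokB1, h1⟩ := hS s A hok
  obtain ⟨B2, hB2B1, hokB2, h2⟩ := hT s B1 hokB1
  refine ⟨B2, hB2B1.trans hB1A, hokB2, ?_⟩
  rw [Set.eq_empty_iff_forall_notMem] at h1 h2 ⊢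
  rintro X ⟨hX, hXS | hXT⟩
  · exact h1 X ⟨cyl_mono hB2B1 hX, hXS⟩
  · exact h2 X ⟨hX, hXT⟩

lemma rnull_finset {T : ℕ → Set (Set ℕ)} (hT : ∀ k, Rnull (T k))
    (ps : Finset (Finset ℕ × ℕ)) (C : Set ℕ) (hC : C.Infinite)
    (hbnd : ∀ p ∈ ps, ∀ a ∈ p.1, ∀ b ∈ C, a < b) :
    ∃ D, D ⊆ C ∧ D.Infinite ∧ ∀ p ∈ ps, cyl p.1 D ∩ T p.2 = ∅ := by
  induction ps using Finset.induction_on generalizing C with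
  | empty => exact ⟨C, subset_rfl, hC, by simp⟩
  | @insert p ps hp ih =>
    obtain ⟨D, hDC, hDinf, hD⟩ := ih C hC (fun p' hp' => hbnd p' (Finset.mem_insert_of_mem hp'))
    have hokp : ok p.1 D := ⟨hDinf, fun a ha b hb =>
      hbnd p (Finset.mem_insert_self p ps) a ha b (hDC hb)⟩
    obtain ⟨E, hED, hokE, hE⟩ := hT p.2 p.1 D hokp
    refine ⟨E, hED.trans hDC, hokE.1, fun p' hp' => ?_⟩
    rcases Finset.mem_insert.1 hp' with rfl | hp'
    · exact hE
    · have := hD p' hp'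
      rw [Set.eq_empty_iff_forall_notMem] at this ⊢
      exact fun X hX => this X ⟨cyl_mono hED hX.1, hX.2⟩

lemma Rnull_iUnion {T : ℕ → Set (Set ℕ)} (hT : ∀ k, Rnull (T k)) : Rnull (⋃ k, T k) := by
  intro s A hok
  obtain ⟨A0, hA0A, hokA0, hA0⟩ := hT 0 s A hok
  set P : Finset ℕ × Set ℕ → Prop := fun FD =>
    FD.2 ⊆ A0 ∧ ↑FD.1 ⊆ A0 ∧ FD.2.Infinite ∧ (∀ a ∈ FD.1, ∀ b ∈ FD.2, a < b) ∧
    ∀ e : Finset ℕ, e ⊆ FD.1 → ∀ k ≤ FD.1.card, cyl (s ∪ e) FD.2 ∩ T k = ∅ with hPdef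
  set R : ℕ → Finset ℕ × Set ℕ → Finset ℕ × Set ℕ → Prop := fun _ FD FD' =>
    FD'.2 ⊆ FD.2 ∧ ∃ m, m ∈ FD.2 ∧ FD'.1 = insert m FD.1 ∧ ∀ b ∈ FD'.2, m < b with hRdef
  have h0 : P (∅, A0) := by
    refine ⟨subset_rfl, by simp, hokA0.1, by simp, fun e he k hk => ?_⟩
    rw [Finset.subset_empty] at he
    subst he
    rw [Finset.card_empty, Nat.le_zero] at hk
    subst hk
    rw [Finset.union_empty]
    exact hA0
  have hstep : ∀ i FD, P FD → ∃ FD', P FD' ∧ R i FD FD' := by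
    rintro i ⟨F, D⟩ ⟨hDA, hFA, hDinf, hFD, hkey⟩
    obtain ⟨m, hm⟩ := hDinf.nonempty
    have hD1inf : (D ∩ Ioi m).Infinite := by
      have : D ∩ Ioi m = D \ Iic m := by rw [Set.diff_eq, Set.compl_Iic]
      rw [this]
      exact hDinf.diff (Set.finite_Iic m)
    set ps : Finset (Finset ℕ × ℕ) :=
      ((insert m F).powerset ×ˢ Finset.range (F.card + 2)).image
        (fun q => (s ∪ q.1, q.2)) with hpsdef
    have hbnd : ∀ p ∈ ps, ∀ a ∈ p.1, ∀ b ∈ D ∩ Ioi m, a < b := by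
      intro p hpp a hap b hb
      obtain ⟨q, hq, rfl⟩ := Finset.mem_image.1 hpp
      obtain ⟨hq1, _⟩ := Finset.mem_product.1 hq
      rw [Finset.mem_powerset] at hq1
      rcases Finset.mem_union.1 hap with has | hae
      · exact hok.2 a has b (hA0A (hDA hb.1))
      · rcases Finset.mem_insert.1 (hq1 hae) with rfl | haF
        · exact hb.2
        · exact hFD a haF b hb.1
    obtain ⟨D', hD'sub, hD'inf, hD'key⟩ := rnull_finset hT ps (D ∩ Ioi m) hD1inf hbnd
    have hmF : m ∉ F := fun hmF => lt_irrefl m (hFD m hmF m hm)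
    refine ⟨(insert m F, D'), ⟨?_, ?_, hD'inf, ?_, ?_⟩, ?_, m, hm, rfl, ?_⟩
    · exact (hD'sub.trans Set.inter_subset_left).trans hDA
    · rw [Finset.coe_insert]
      exact Set.insert_subset (hDA hm) hFA
    · intro a ha b hb
      rcases Finset.mem_insert.1 ha with rfl | haF
      · exact (hD'sub hb).2
      · exact hFD a haF b ((hD'sub hb).1)
    · intro e he k hk
      rw [Finset.card_insert_of_notMem hmF] at hk
      exact hD'key (s ∪ e, k) (Finset.mem_image.2 ⟨(e, k),
        Finset.mem_product.2 ⟨Finset.mem_powerset.2 he,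
          Finset.mem_range.2 (Nat.lt_succ_of_le (by omega))⟩, rfl⟩)
    · exact hD'sub.trans Set.inter_subset_left
    · exact fun b hb => (hD'sub hb).2
  obtain ⟨f, hf0, hfP, hfR⟩ := exists_chain P R (∅, A0) h0 hstep
  set F : ℕ → Finset ℕ := fun i => (f i).1 with hFdef
  set D : ℕ → Set ℕ := fun i => (f i).2 with hDdef
  have hDsucc : ∀ i, D (i + 1) ⊆ D i := fun i => (hfR i).1
  have hDanti : Antitone D := antitone_nat_of_succ_le hDsucc
  obtain ⟨n, hn⟩ : ∃ n : ℕ → ℕ, ∀ i, n i ∈ D i ∧ F (i + 1) = insert (n i) (F i) ∧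
      ∀ b ∈ D (i + 1), n i < b := by
    have := fun i => (hfR i).2
    choose n h1 h2 h3 using this
    exact ⟨n, fun i => ⟨h1 i, h2 i, h3 i⟩⟩
  have hF0 : F 0 = ∅ := by show (f 0).1 = ∅; rw [hf0]
  have hFmono : Monotone F := monotone_nat_of_le_succ fun i => by
    rw [(hn i).2.1]; exact Finset.subset_insert _ _
  have hDA0 : ∀ i, D i ⊆ A0 := fun i => (hfP i).1
  have hFltD : ∀ i, ∀ a ∈ F i, ∀ b ∈ D i, a < b := fun i => (hfP i).2.2.2.1
  have hnstrict : StrictMono n := strictMono_nat_of_lt_succ fun i => (hn i).2.2 _ ((hn (i+1)).1)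
  have hcard : ∀ i, (F i).card = i := by
    intro i
    induction i with
    | zero => rw [hF0, Finset.card_empty]
    | succ i ih =>
      rw [(hn i).2.1, Finset.card_insert_of_notMem
        (fun h => lt_irrefl (n i) (hFltD i _ h _ ((hn i).1))), ih]
  have hnF : ∀ i j, j < i → n j ∈ F i := by
    intro i j hji
    have : n j ∈ F (j + 1) := by rw [(hn j).2.1]; exact Finset.mem_insert_self _ _
    exact hFmono hji this
  set B : Set ℕ := Set.range n with hBdef
  have hBinf : B.Infinite := Set.infinite_range_of_injective hnstrict.injective
  have hBA0 : B ⊆ A0 := by rintro _ ⟨j, rfl⟩; exact hDA0 j ((hn j).1)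
  refine ⟨B, hBA0.trans hA0A, ok_mono hokA0 hBA0 hBinf, ?_⟩
  rw [Set.eq_empty_iff_forall_notMem]
  rintro X ⟨hcyl, hXU⟩
  obtain ⟨Tk, ⟨k, rfl⟩, hXTk⟩ := hXU
  set e : Finset ℕ := (F k).filter (· ∈ X) with hedef
  have he : e ⊆ F k := Finset.filter_subset _ _
  apply Set.eq_empty_iff_forall_notMem.1 ((hfP k).2.2.2.2 e he k (by rw [hcard k])) X
  refine ⟨⟨hcyl.1, ?_, ?_⟩, hXTk⟩
  · rw [Finset.coe_union]
    refine Set.union_subset hcyl.2.1 ?_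
    intro a ha
    exact (Finset.mem_filter.1 (Finset.mem_coe.1 ha)).2
  · intro x hx
    rcases hcyl.2.2 hx with h | h
    · exact Set.mem_union_left _ (by
        rw [Finset.coe_union]
        exact Set.mem_union_left _ h)
    · obtain ⟨j, rfl⟩ := h
      rcases lt_or_ge j k with hjk | hkj
      · refine Set.mem_union_left _ ?_
        rw [Finset.coe_union]
        refine Set.mem_union_right _ ?_
        rw [Finset.mem_coe, hedef, Finset.mem_filter]
        exact ⟨hnF k j hjk, hx⟩
      · exact Set.mem_union_right _ (hDanti hkj ((hn j).1))

def BP (S : Set (Set ℕ)) : Prop :=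
  ∃ U M, EOpen U ∧ Rnull M ∧ S \ U ⊆ M ∧ U \ S ⊆ M

lemma BP_of_EOpen {U : Set (Set ℕ)} (hU : EOpen U) : BP U :=
  ⟨U, ∅, hU, Rnull_empty, by simp, by simp⟩

lemma EOpen_iUnion {U : ℕ → Set (Set ℕ)} (hU : ∀ k, EOpen (U k)) : EOpen (⋃ k, U k) := by
  rintro X hX
  obtain ⟨Uk, ⟨k, rfl⟩, hXk⟩ := hX
  obtain ⟨t, A, h1, h2, h3⟩ := hU k X hXk
  exact ⟨t, A, h1, h2, h3.trans (Set.subset_iUnion _ k)⟩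

lemma BP_iUnion {S : ℕ → Set (Set ℕ)} (hS : ∀ k, BP (S k)) : BP (⋃ k, S k) := by
  choose U M hU hM hSU hUS using hS
  refine ⟨⋃ k, U k, ⋃ k, M k, EOpen_iUnion hU, Rnull_iUnion hM, ?_, ?_⟩
  · rintro X ⟨hX1, hX2⟩
    obtain ⟨Sk, ⟨k, rfl⟩, hXk⟩ := hX1
    exact Set.mem_iUnion.2 ⟨k, hSU k ⟨hXk, fun hXU => hX2 (Set.mem_iUnion.2 ⟨k, hXU⟩)⟩⟩
  · rintro X ⟨hX1, hX2⟩
    obtain ⟨Uk, ⟨k, rfl⟩, hXk⟩ := hX1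
    exact Set.mem_iUnion.2 ⟨k, hUS k ⟨hXk, fun hXS => hX2 (Set.mem_iUnion.2 ⟨k, hXS⟩)⟩⟩

lemma BP_crstar {S : Set (Set ℕ)} (hS : BP S) : CRstar S := by
  obtain ⟨U, M, hU, hM, hSU, hUS⟩ := hS
  intro s A hok
  obtain ⟨B1, hB1A, hokB1, hB1⟩ := hM s A hok
  obtain ⟨B2, hB2B1, hokB2, hB2⟩ := eopen_crstar hU s B1 hokB1
  rw [Set.eq_empty_iff_forall_notMem] at hB1
  refine ⟨B2, hB2B1.trans hB1A, hokB2, ?_⟩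
  rcases hB2 with h | h
  · refine Or.inl ?_
    intro X hX
    by_contra hXS
    exact hB1 X ⟨cyl_mono hB2B1 hX, hUS ⟨h hX, hXS⟩⟩
  · refine Or.inr ?_
    rw [Set.eq_empty_iff_forall_notMem] at h ⊢
    rintro X ⟨hX1, hX2⟩
    by_cases hXU : X ∈ U
    · exact h X ⟨hX1, hXU⟩
    · exact hB1 X ⟨cyl_mono hB2B1 hX1, hSU ⟨hX2, hXU⟩⟩

lemma BP_compl {S : Set (Set ℕ)} (hS : BP S) (hSInfs : S ⊆ Infs) : BP (Infs \ S) := by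
  obtain ⟨U, M, hU, hM, hSU, hUS⟩ := hS
  set U' : Set (Set ℕ) := {X | ∃ t A, ok t A ∧ X ∈ cyl t A ∧ cyl t A ⊆ Infs \ U} with hU'def
  have hU'open : EOpen U' := by
    rintro X ⟨t, A, h1, h2, h3⟩
    exact ⟨t, A, h1, h2, fun Y hY => ⟨t, A, h1, hY, h3⟩⟩
  have hU'sub : U' ⊆ Infs \ U := by
    rintro X ⟨t, A, _, h2, h3⟩
    exact h3 h2
  set M' : Set (Set ℕ) := (Infs \ U) \ U' with hM'def
  have hM'null : Rnull M' := by
    intro s A hok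
    obtain ⟨B, hBA, hokB, hB⟩ := eopen_crstar hU s A hok
    refine ⟨B, hBA, hokB, ?_⟩
    rw [Set.eq_empty_iff_forall_notMem]
    rcases hB with h | h
    · rintro X ⟨hX1, hX2⟩
      exact hX2.1.2 (h hX1)
    · rintro X ⟨hX1, hX2⟩
      refine hX2.2 ⟨s, B, hokB, hX1, ?_⟩
      intro Y hY
      refine ⟨cyl_subset_Infs hY, fun hYU => ?_⟩
      rw [Set.eq_empty_iff_forall_notMem] at h
      exact h Y ⟨hY, hYU⟩
  refine ⟨U', M ∪ M', hU'open, Rnull_union hM hM'null, ?_, ?_⟩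
  · rintro X ⟨⟨hXInfs, hXS⟩, hXU'⟩
    by_cases hXU : X ∈ U
    · exact Or.inl (hUS ⟨hXU, hXS⟩)
    · exact Or.inr ⟨⟨hXInfs, hXU⟩, hXU'⟩
  · rintro X ⟨hXU', hXc⟩
    have hXIU := hU'sub hXU'
    have hXS : X ∈ S := by
      by_contra hXS
      exact hXc ⟨hXIU.1, hXS⟩
    exact Or.inl (hSU ⟨hXS, hXIU.2⟩)

lemma BP_iInter {S : ℕ → Set (Set ℕ)} (hS : ∀ k, BP (S k)) (hSInfs : ∀ k, S k ⊆ Infs) :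
    BP (⋂ k, S k) := by
  have key : (⋂ k, S k) = Infs \ (⋃ k, Infs \ S k) := by
    ext X
    simp only [Set.mem_iInter, Set.mem_diff, Set.mem_iUnion, not_exists]
    constructor
    · intro h
      exact ⟨hSInfs 0 (h 0), fun k hk => hk.2 (h k)⟩
    · rintro ⟨hXI, h⟩ k
      by_contra hXS
      exact h k ⟨hXI, hXS⟩
  rw [key]
  refine BP_compl (BP_iUnion fun k => BP_compl (hS k) (hSInfs k)) ?_
  intro X hX
  obtain ⟨T, ⟨k, rfl⟩, hXT⟩ := hX
  exact hXT.1

end BPmach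

section Determined

/-- `Nat.count` agrees on sets agreeing below `n`. -/
lemma count_congr {X Y : Set ℕ} {c : ℕ} (h : X ∩ Iio c = Y ∩ Iio c) {n : ℕ} (hn : n ≤ c) :
    Nat.count (· ∈ X) n = Nat.count (· ∈ Y) n := by
  simp only [Nat.count_eq_card_filter_range]
  congr 1
  apply Finset.filter_congr
  intro x hx
  simp only [Finset.mem_range] at hx
  have hxc : x < c := lt_of_lt_of_le hx hn
  constructor
  · intro hX
    have : x ∈ Y ∩ Iio c := h ▸ ⟨hX, hxc⟩
    simpa using this.1
  · intro hY
    have : x ∈ X ∩ Iio c := h.symm ▸ ⟨hY, hxc⟩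
    simpa using this.1

/-- `Nat.nth` agrees for sets agreeing on an initial segment. -/
lemma nth_congr {X Y : Set ℕ} (hX : X.Infinite) (hY : Y.Infinite) {c j : ℕ}
    (h : X ∩ Iio c = Y ∩ Iio c) (hj : Nat.nth (· ∈ X) j < c) :
    Nat.nth (· ∈ Y) j = Nat.nth (· ∈ X) j := by
  have hX' : {n | n ∈ X}.Infinite := hX
  have hY' : {n | n ∈ Y}.Infinite := hY
  have hmemX : Nat.nth (· ∈ X) j ∈ X := Nat.nth_mem_of_infinite hX' j
  have hmemY : Nat.nth (· ∈ X) j ∈ Y := by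
    have : Nat.nth (· ∈ X) j ∈ Y ∩ Iio c := h ▸ ⟨hmemX, hj⟩
    exact this.1
  have h1 : Nat.count (· ∈ Y) (Nat.nth (· ∈ X) j) = j := by
    rw [← count_congr h (le_of_lt hj), Nat.count_nth_of_infinite hX' j]
  have := Nat.nth_count (p := (· ∈ Y)) hmemY
  rw [h1] at this
  exact this

/-- `Nat.nth` of the range of a strictly monotone function. -/
lemma nth_range_strictMono (f : ℕ → ℕ) (hf : StrictMono f) (k : ℕ) :
    Nat.nth (· ∈ Set.range f) k = f k := by
  have h1 : Nat.count (· ∈ Set.range f) (f k) = k := by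
    simp only [Nat.count_eq_card_filter_range]
    have : (Finset.range (f k)).filter (· ∈ Set.range f) = (Finset.range k).image f := by
      apply Finset.ext
      intro x
      simp only [Finset.mem_filter, Finset.mem_range, Finset.mem_image]
      constructor
      · rintro ⟨hx, a, rfl⟩
        exact ⟨a, by rwa [← hf.lt_iff_lt], rfl⟩
      · rintro ⟨a, ha, rfl⟩
        exact ⟨hf.lt_iff_lt.2 ha, a, rfl⟩
    rw [this, Finset.card_image_of_injective _ hf.injective, Finset.card_range]
  have hmem : f k ∈ Set.range f := Set.mem_range_self k
  have := Nat.nth_count (p := (· ∈ Set.range f)) hmem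
  rw [h1] at this
  exact this

def Determined (J : ℕ) (T : Set (Set ℕ)) : Prop :=
  T ⊆ Infs ∧ ∀ X Y : Set ℕ, X.Infinite → Y.Infinite →
    (∀ j < J, Nat.nth (· ∈ Y) j = Nat.nth (· ∈ X) j) → (X ∈ T → Y ∈ T)

lemma determined_compl {J : ℕ} {T : Set (Set ℕ)} (h : Determined J T) :
    Determined J (Infs \ T) := by
  refine ⟨Set.diff_subset, fun X Y hX hY hj hXT => ⟨hY, fun hYT => ?_⟩⟩
  have : ∀ j < J, Nat.nth (· ∈ X) j = Nat.nth (· ∈ Y) j := by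
    intro j hjJ
    exact (hj j hjJ).symm
  exact hXT.2 (h.2 Y X hY hX this hYT)

lemma determined_eopen {J : ℕ} {T : Set (Set ℕ)} (h : Determined J T) : EOpen T := by
  intro X hXT
  have hXinf : X.Infinite := h.1 hXT
  rcases Nat.eq_zero_or_pos J with rfl | hJ
  · refine ⟨∅, Set.univ, ⟨Set.infinite_univ, by simp⟩, ⟨hXinf, by simp, by simp⟩, ?_⟩
    intro Y hY
    exact h.2 X Y hXinf hY.1 (by simp) hXT
  · set c : ℕ := Nat.nth (· ∈ X) (J - 1) + 1 with hcdef
    set t : Finset ℕ := (Finset.range J).image (Nat.nth (· ∈ X)) with htdef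
    have hXinf' : {n | n ∈ X}.Infinite := hXinf
    have hnth_lt_c : ∀ j < J, Nat.nth (· ∈ X) j < c := by
      intro j hjJ
      have : Nat.nth (· ∈ X) j ≤ Nat.nth (· ∈ X) (J - 1) :=
        Nat.nth_monotone hXinf' (by omega)
      omega
    have htc : (↑t : Set ℕ) = X ∩ Iio c := by
      ext a
      simp only [htdef, Finset.coe_image, Finset.coe_range, Set.mem_image, Set.mem_Iio,
        Set.mem_inter_iff]
      constructor
      · rintro ⟨j, hj, rfl⟩
        exact ⟨Nat.nth_mem_of_infinite hXinf' j, hnth_lt_c j hj⟩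
      · rintro ⟨haX, hac⟩
        refine ⟨Nat.count (· ∈ X) a, ?_, Nat.nth_count haX⟩
        have h1 : a ≤ Nat.nth (· ∈ X) (J - 1) := by omega
        have h2 : Nat.count (· ∈ X) a ≤ Nat.count (· ∈ X) (Nat.nth (· ∈ X) (J - 1)) :=
          Nat.count_monotone _ h1
        rw [Nat.count_nth_of_infinite hXinf'] at h2
        omega
    refine ⟨t, Set.Ici c, ⟨Set.Ici_infinite c, ?_⟩, ⟨hXinf, ?_, ?_⟩, ?_⟩
    · intro a ha b hb
      have : a ∈ X ∩ Iio c := htc ▸ (Finset.mem_coe.2 ha)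
      exact lt_of_lt_of_le this.2 hb
    · intro a ha
      exact (htc ▸ ha : a ∈ X ∩ Iio c).1
    · intro a haX
      rcases lt_or_ge a c with hac | hac
      · exact Set.mem_union_left _ (htc ▸ (⟨haX, hac⟩ : a ∈ X ∩ Iio c) : _)
      · exact Set.mem_union_right _ hac
    · intro Y hY
      have hYinf : Y.Infinite := hY.1
      have hYc : Y ∩ Iio c = X ∩ Iio c := by
        ext a
        constructor
        · rintro ⟨haY, hac⟩
          rcases hY.2.2 haY with h' | h'
          · exact htc ▸ h'
          · exact absurd (show a < c from hac) (not_lt.2 h')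
        · rintro ha
          exact ⟨hY.2.1 (htc ▸ ha : a ∈ (↑t : Set ℕ)), ha.2⟩
      refine h.2 X Y hXinf hYinf (fun j hj => ?_) hXT
      exact nth_congr hXinf hYinf hYc.symm (hnth_lt_c j hj)

lemma determined_BP {J : ℕ} {T : Set (Set ℕ)} (h : Determined J T) : BP T :=
  BP_of_EOpen (determined_eopen h)

end Determined

section Cesaro

variable {E : Type*} [NormedAddCommGroup E] [NormedSpace ℝ E]

noncomputable def avg (z : ℕ → E) (N : ℕ) : E := (N : ℝ)⁻¹ • ∑ k ∈ Finset.range N, z k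

noncomputable def seqOf (x : ℕ → E) (X : Set ℕ) : ℕ → E := fun j => x (Nat.nth (· ∈ X) j)

def Tset (x : ℕ → E) (k N m n : ℕ) : Set (Set ℕ) :=
  {X | X.Infinite ∧ (m < N ∨ n < N ∨
    ‖avg (seqOf x X) m - avg (seqOf x X) n‖ ≤ 1 / (k + 1 : ℝ))}

lemma Tset_determined (x : ℕ → E) (k N m n : ℕ) :
    Determined (max m n) (Tset x k N m n) := by
  refine ⟨fun X hX => hX.1, fun X Y hX hY hj hXT => ⟨hY, ?_⟩⟩
  have havg : ∀ q ≤ max m n, avg (seqOf x Y) q = avg (seqOf x X) q := by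
    intro q hq
    unfold avg seqOf
    congr 1
    apply Finset.sum_congr rfl
    intro j hjq
    rw [Finset.mem_range] at hjq
    rw [hj j (lt_of_lt_of_le hjq hq)]
  rcases hXT.2 with h | h | h
  · exact Or.inl h
  · exact Or.inr (Or.inl h)
  · refine Or.inr (Or.inr ?_)
    rw [havg m (le_max_left m n), havg n (le_max_right m n)]
    exact h

def Cset (x : ℕ → E) : Set (Set ℕ) :=
  ⋂ k, ⋃ N, ⋂ m, ⋂ n, Tset x k N m n

lemma Cset_BP (x : ℕ → E) : BP (Cset x) := by
  have hT : ∀ k N m n, BP (Tset x k N m n) := fun k N m n =>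
    determined_BP (Tset_determined x k N m n)
  have hTInfs : ∀ k N m n, Tset x k N m n ⊆ Infs := fun k N m n X hX => hX.1
  have h1 : ∀ k N m, BP (⋂ n, Tset x k N m n) := fun k N m =>
    BP_iInter (fun n => hT k N m n) (fun n => hTInfs k N m n)
  have h1Infs : ∀ k N m, (⋂ n, Tset x k N m n) ⊆ Infs := fun k N m =>
    (Set.iInter_subset _ 0).trans (hTInfs k N m 0)
  have h2 : ∀ k N, BP (⋂ m, ⋂ n, Tset x k N m n) := fun k N =>
    BP_iInter (fun m => h1 k N m) (fun m => h1Infs k N m)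
  have h3 : ∀ k, BP (⋃ N, ⋂ m, ⋂ n, Tset x k N m n) := fun k =>
    BP_iUnion (fun N => h2 k N)
  refine BP_iInter h3 ?_
  intro k X hX
  obtain ⟨T, ⟨N, rfl⟩, hXT⟩ := hX
  exact h1Infs k N 0 (by
    simp only [Set.mem_iInter] at hXT ⊢
    exact fun n => hXT 0 n)

lemma mem_Cset_iff {x : ℕ → E} {X : Set ℕ} (hX : X.Infinite) :
    X ∈ Cset x ↔ CauchySeq (avg (seqOf x X)) := by
  constructor
  · intro h
    rw [Metric.cauchySeq_iff]
    intro ε hε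
    obtain ⟨k, hk⟩ := exists_nat_one_div_lt hε
    have hk' := Set.mem_iInter.1 h k
    obtain ⟨T, ⟨N, rfl⟩, hXT⟩ := hk'
    simp only [Set.mem_iInter] at hXT
    refine ⟨N, fun m hm n hn => ?_⟩
    rcases (hXT m n).2 with h' | h' | h'
    · omega
    · omega
    · rw [dist_eq_norm]
      exact lt_of_le_of_lt h' hk
  · intro h
    rw [Metric.cauchySeq_iff] at h
    rw [Cset, Set.mem_iInter]
    intro k
    have hpos : (0 : ℝ) < 1 / (k + 1 : ℝ) := by positivity
    obtain ⟨N, hN⟩ := h _ hpos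
    refine Set.mem_iUnion.2 ⟨N, ?_⟩
    simp only [Set.mem_iInter]
    intro m n
    refine ⟨hX, ?_⟩
    rcases lt_or_ge m N with hm | hm
    · exact Or.inl hm
    rcases lt_or_ge n N with hn | hn
    · exact Or.inr (Or.inl hn)
    · refine Or.inr (Or.inr ?_)
      have := hN m hm n hn
      rw [dist_eq_norm] at this
      exact le_of_lt this

theorem main_comb (x : ℕ → E) : ∃ M : Set ℕ, M.Infinite ∧
    ((∀ X : Set ℕ, X.Infinite → X ⊆ M → CauchySeq (avg (seqOf x X))) ∨
     (∀ X : Set ℕ, X.Infinite → X ⊆ M → ¬ CauchySeq (avg (seqOf x X)))) := by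
  obtain ⟨B, _, hokB, hB⟩ := BP_crstar (Cset_BP x) ∅ Set.univ
    ⟨Set.infinite_univ, by simp⟩
  refine ⟨B, hokB.1, ?_⟩
  have hmem : ∀ X : Set ℕ, X.Infinite → X ⊆ B → X ∈ cyl ∅ B := by
    intro X hX hXB
    exact ⟨hX, by simp, by simpa using hXB⟩
  rcases hB with h | h
  · exact Or.inl fun X hX hXB => (mem_Cset_iff hX).1 (h (hmem X hX hXB))
  · refine Or.inr fun X hX hXB hc => ?_
    rw [Set.eq_empty_iff_forall_notMem] at h
    exact h X ⟨hmem X hX hXB, (mem_Cset_iff hX).2 hc⟩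

end Cesaro

section Analysis

variable {E : Type*} [NormedAddCommGroup E] [NormedSpace ℝ E]

lemma sum_split (f : ℕ → E) (m n : ℕ) :
    ∑ k ∈ Finset.range (m + n), f k =
      ∑ k ∈ Finset.range m, f k + ∑ r ∈ Finset.range n, f (m + r) := by
  rw [← Finset.sum_range_add_sum_Ico f (Nat.le_add_right m n),
    Finset.sum_Ico_eq_sum_range]
  simp

lemma norm_sum_sub_card_smul_le (f : ℕ → E) (c : E) (P : ℕ) (R : ℝ)
    (hf : ∀ k, ‖f k‖ ≤ R) :
    ‖∑ k ∈ Finset.range P, f k - (P : ℝ) • c‖ ≤ (P : ℝ) * (R + ‖c‖) := by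
  have h1 : ∑ k ∈ Finset.range P, f k - (P : ℝ) • c
      = ∑ k ∈ Finset.range P, (f k - c) := by
    rw [Finset.sum_sub_distrib, Finset.sum_const, Finset.card_range,
      ← Nat.cast_smul_eq_nsmul ℝ]
  rw [h1]
  refine (norm_sum_le _ _).trans ?_
  have : ∀ k ∈ Finset.range P, ‖f k - c‖ ≤ R + ‖c‖ := fun k _ =>
    (norm_sub_le _ _).trans (add_le_add_left (hf k) _)
  calc ∑ k ∈ Finset.range P, ‖f k - c‖ ≤ ∑ _k ∈ Finset.range P, (R + ‖c‖) :=
        Finset.sum_le_sum this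
    _ = (P : ℝ) * (R + ‖c‖) := by rw [Finset.sum_const, Finset.card_range, nsmul_eq_mul]

lemma smul_avg (z : ℕ → E) (q : ℕ) (hq : q ≠ 0) :
    (q : ℝ) • avg z q = ∑ k ∈ Finset.range q, z k := by
  unfold avg
  rw [smul_smul, mul_inv_cancel₀ (Nat.cast_ne_zero.2 hq), one_smul]

lemma block_est (y : ℕ → E) (R : ℝ) (hR : ∀ k, ‖y k‖ ≤ R) (τ ψ : ℕ → ℕ) (c : E)
    (P p q : ℕ) (hpq : p < q)
    (hagree : ∀ r < q - p, τ (P + r) = ψ (p + r)) :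
    ‖avg (y ∘ τ) (P + (q - p)) - c‖ ≤
      ((P : ℝ) * (R + ‖c‖) + (p : ℝ) * (R + ‖c‖) + (q : ℝ) * ‖avg (y ∘ ψ) q - c‖) /
        (P + (q - p) : ℕ) := by
  set N : ℕ := P + (q - p) with hNdef
  have hN0 : N ≠ 0 := by omega
  have hq0 : q ≠ 0 := by omega
  have hNcast : (N : ℝ) = (P : ℝ) + (q : ℝ) - (p : ℝ) := by
    rw [hNdef, Nat.cast_add, Nat.cast_sub (le_of_lt hpq)]
    ring
  -- rewrite the average difference
  have key : avg (y ∘ τ) N - c = (N : ℝ)⁻¹ •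
      ((∑ k ∈ Finset.range P, y (τ k) - (P : ℝ) • c) +
       ((∑ k ∈ Finset.range q, y (ψ k) - (q : ℝ) • c) -
        (∑ k ∈ Finset.range p, y (ψ k) - (p : ℝ) • c))) := by
    have hsum : ∑ k ∈ Finset.range N, y (τ k) =
        ∑ k ∈ Finset.range P, y (τ k) + ∑ r ∈ Finset.range (q - p), y (ψ (p + r)) := by
      rw [hNdef, sum_split (fun k => y (τ k)) P (q - p)]
      congr 1
      apply Finset.sum_congr rfl
      intro r hr
      rw [Finset.mem_range] at hr
      rw [hagree r hr]
    have hsum2 : ∑ r ∈ Finset.range (q - p), y (ψ (p + r)) =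
        ∑ k ∈ Finset.range q, y (ψ k) - ∑ k ∈ Finset.range p, y (ψ k) := by
      have : ∑ k ∈ Finset.range q, y (ψ k) =
          ∑ k ∈ Finset.range p, y (ψ k) + ∑ r ∈ Finset.range (q - p), y (ψ (p + r)) := by
        have hq' : p + (q - p) = q := by omega
        calc ∑ k ∈ Finset.range q, y (ψ k)
            = ∑ k ∈ Finset.range (p + (q - p)), y (ψ k) := by rw [hq']
          _ = _ := sum_split (fun k => y (ψ k)) p (q - p)
      rw [this]; abel
    have hc' : c = (N : ℝ)⁻¹ • ((N : ℝ) • c) := by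
      rw [smul_smul, inv_mul_cancel₀ (Nat.cast_ne_zero.2 hN0), one_smul]
    calc avg (y ∘ τ) N - c = (N : ℝ)⁻¹ • (∑ k ∈ Finset.range N, y (τ k)) -
          (N : ℝ)⁻¹ • ((N : ℝ) • c) := by rw [← hc']; rfl
      _ = (N : ℝ)⁻¹ • ((∑ k ∈ Finset.range N, y (τ k)) - (N : ℝ) • c) := by
          rw [smul_sub]
      _ = _ := by
          congr 1
          rw [hsum, hsum2, hNcast]
          have : ((P : ℝ) + (q : ℝ) - (p : ℝ)) • c
              = (P : ℝ) • c + ((q : ℝ) • c - (p : ℝ) • c) := by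
            rw [sub_smul, add_smul]; abel
          rw [this]
          abel
  rw [key, norm_smul, norm_inv, Real.norm_natCast, div_eq_inv_mul]
  apply mul_le_mul_of_nonneg_left _ (by positivity)
  have hb1 := norm_sum_sub_card_smul_le (fun k => y (τ k)) c P R (fun k => hR _)
  have hb3 := norm_sum_sub_card_smul_le (fun k => y (ψ k)) c p R (fun k => hR _)
  have hb2 : ‖∑ k ∈ Finset.range q, y (ψ k) - (q : ℝ) • c‖ = (q : ℝ) * ‖avg (y ∘ ψ) q - c‖ := by
    have : ∑ k ∈ Finset.range q, y (ψ k) - (q : ℝ) • c = (q : ℝ) • (avg (y ∘ ψ) q - c) := by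
      rw [smul_sub, smul_avg (y ∘ ψ) q hq0]; rfl
    rw [this, norm_smul, Real.norm_natCast]
  have h4 : ‖(∑ k ∈ Finset.range P, y (τ k) - (P : ℝ) • c) +
      ((∑ k ∈ Finset.range q, y (ψ k) - (q : ℝ) • c) -
       (∑ k ∈ Finset.range p, y (ψ k) - (p : ℝ) • c))‖ ≤
      ‖∑ k ∈ Finset.range P, y (τ k) - (P : ℝ) • c‖ +
      (‖∑ k ∈ Finset.range q, y (ψ k) - (q : ℝ) • c‖ +
       ‖∑ k ∈ Finset.range p, y (ψ k) - (p : ℝ) • c‖) :=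
    (norm_add_le _ _).trans (add_le_add_right (norm_sub_le _ _) _)
  linarith

lemma exists_block (y : ℕ → E) (R : ℝ) (hR : ∀ k, ‖y k‖ ≤ R) (ψ : ℕ → ℕ)
    (hψ : StrictMono ψ) (c : E) (hc : Tendsto (avg (y ∘ ψ)) atTop (𝓝 c))
    (P v : ℕ) (ε : ℝ) (hε : 0 < ε) :
    ∃ p q : ℕ, p < q ∧ v < ψ p ∧
      ((P : ℝ) * (R + ‖c‖) + (p : ℝ) * (R + ‖c‖) + (q : ℝ) * ‖avg (y ∘ ψ) q - c‖) /
        (P + (q - p) : ℕ) ≤ ε := by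
  have hR0 : (0 : ℝ) ≤ R := le_trans (norm_nonneg _) (hR 0)
  have hRc : (0 : ℝ) ≤ R + ‖c‖ := add_nonneg hR0 (norm_nonneg _)
  set p : ℕ := v + 1 with hpdef
  have hvp : v < ψ p := lt_of_lt_of_le (Nat.lt_succ_self v) (hψ.le_apply)
  obtain ⟨K, hK⟩ := (Metric.tendsto_atTop.1 hc) (ε / 4) (by positivity)
  set q : ℕ := max (max (K + 1) (2 * p + 1)) (p + 1 + ⌈((P : ℝ) + p) * (R + ‖c‖) * 2 / ε⌉₊)
    with hqdef
  have hpq : p < q := by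
    have : p + 1 ≤ p + 1 + ⌈((P : ℝ) + p) * (R + ‖c‖) * 2 / ε⌉₊ := Nat.le_add_right _ _
    omega
  have hqK : K ≤ q := by omega
  have hq2p : 2 * p + 1 ≤ q := by omega
  have hqceil : p + 1 + ⌈((P : ℝ) + p) * (R + ‖c‖) * 2 / ε⌉₊ ≤ q := le_max_right _ _
  refine ⟨p, q, hpq, hvp, ?_⟩
  set N : ℕ := P + (q - p) with hNdef
  have hN0 : 0 < N := by omega
  have hNpos : (0 : ℝ) < (N : ℕ) := by exact_mod_cast hN0
  have havgq : ‖avg (y ∘ ψ) q - c‖ ≤ ε / 4 := by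
    have := hK q hqK
    rw [dist_eq_norm] at this
    exact le_of_lt this
  -- split the fraction
  rw [div_le_iff₀ hNpos]
  have hterm1 : ((P : ℝ) + p) * (R + ‖c‖) ≤ ε / 2 * N := by
    have hqp : (((P : ℝ) + p) * (R + ‖c‖) * 2 / ε) ≤ ((q - p : ℕ) : ℝ) := by
      have h1 : (⌈((P : ℝ) + p) * (R + ‖c‖) * 2 / ε⌉₊ : ℝ) ≤ ((q - p : ℕ) : ℝ) := by
        have : ⌈((P : ℝ) + p) * (R + ‖c‖) * 2 / ε⌉₊ ≤ q - p := by omega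
        exact_mod_cast this
      exact (Nat.le_ceil _).trans h1
    have hqpN : ((q - p : ℕ) : ℝ) ≤ (N : ℝ) := by
      have : (q - p : ℕ) ≤ N := by omega
      exact_mod_cast this
    have := (div_le_iff₀ hε).1 ((hqp.trans hqpN))
    calc ((P : ℝ) + p) * (R + ‖c‖) = ((P : ℝ) + p) * (R + ‖c‖) * 2 / 2 := by ring
      _ ≤ (N : ℝ) * ε / 2 := by
          apply div_le_div_of_nonneg_right _ (by norm_num)
          linarith
      _ = ε / 2 * N := by ring
  have hterm2 : (q : ℝ) * ‖avg (y ∘ ψ) q - c‖ ≤ ε / 2 * N := by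
    have hq2N : (q : ℝ) ≤ 2 * N := by
      have : q ≤ 2 * N := by omega
      exact_mod_cast this
    calc (q : ℝ) * ‖avg (y ∘ ψ) q - c‖ ≤ (2 * N) * (ε / 4) := by
          apply mul_le_mul hq2N havgq (norm_nonneg _) (by positivity)
      _ = ε / 2 * N := by ring
  calc (P : ℝ) * (R + ‖c‖) + (p : ℝ) * (R + ‖c‖) + (q : ℝ) * ‖avg (y ∘ ψ) q - c‖
      = ((P : ℝ) + p) * (R + ‖c‖) + (q : ℝ) * ‖avg (y ∘ ψ) q - c‖ := by ring
    _ ≤ ε / 2 * N + ε / 2 * N := add_le_add hterm1 hterm2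
    _ = ε * N := by ring

theorem limits_unique (y : ℕ → E) (R : ℝ) (hR : ∀ k, ‖y k‖ ≤ R)
    (H : ∀ τ : ℕ → ℕ, StrictMono τ → ∃ L, Tendsto (avg (y ∘ τ)) atTop (𝓝 L))
    (ψ₁ ψ₂ : ℕ → ℕ) (h₁ : StrictMono ψ₁) (h₂ : StrictMono ψ₂) (c₁ c₂ : E)
    (hc₁ : Tendsto (avg (y ∘ ψ₁)) atTop (𝓝 c₁))
    (hc₂ : Tendsto (avg (y ∘ ψ₂)) atTop (𝓝 c₂)) :
    c₁ = c₂ := by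
  set Ψ : ℕ → ℕ → ℕ := fun i => if Even i then ψ₁ else ψ₂ with hΨdef
  set cc : ℕ → E := fun i => if Even i then c₁ else c₂ with hccdef
  have hΨmono : ∀ i, StrictMono (Ψ i) := by
    intro i
    by_cases h : Even i <;> simp [hΨdef, h, h₁, h₂]
  have hccconv : ∀ i, Tendsto (avg (y ∘ Ψ i)) atTop (𝓝 (cc i)) := by
    intro i
    by_cases h : Even i <;> simp [hΨdef, hccdef, h, hc₁, hc₂]
  -- chain of blocks
  set Pinv : ℕ × ℕ × ℕ × ℕ → Prop := fun σ => σ.2.2.1 < σ.2.2.2 ∧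
    (((σ.2.1 : ℝ)) * (R + ‖cc σ.1‖) + (σ.2.2.1 : ℝ) * (R + ‖cc σ.1‖) +
      (σ.2.2.2 : ℝ) * ‖avg (y ∘ Ψ σ.1) σ.2.2.2 - cc σ.1‖) /
      ((σ.2.1 + (σ.2.2.2 - σ.2.2.1) : ℕ)) ≤ 1 / (σ.1 + 1 : ℝ) with hPinvdef
  set Rrel : ℕ → ℕ × ℕ × ℕ × ℕ → ℕ × ℕ × ℕ × ℕ → Prop := fun _ σ σ' =>
    σ'.1 = σ.1 + 1 ∧ σ'.2.1 = σ.2.1 + (σ.2.2.2 - σ.2.2.1) ∧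
    Ψ σ.1 (σ.2.2.2 - 1) < Ψ σ'.1 σ'.2.2.1 with hRreldef
  obtain ⟨p0, q0, hpq0, _, hest0⟩ := exists_block y R hR (Ψ 0) (hΨmono 0) (cc 0)
    (hccconv 0) 0 0 (1 / (0 + 1 : ℝ)) (by norm_num)
  have h00 : Pinv (0, 0, p0, q0) := ⟨hpq0, by convert hest0 using 2 <;> norm_num⟩
  have hstep : ∀ i σ, Pinv σ → ∃ σ', Pinv σ' ∧ Rrel i σ σ' := by
    rintro _ ⟨i, P, p, q⟩ ⟨hpq, _⟩
    obtain ⟨p', q', hpq', hv', hest'⟩ := exists_block y R hR (Ψ (i + 1)) (hΨmono (i + 1))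
      (cc (i + 1)) (hccconv (i + 1)) (P + (q - p)) (Ψ i (q - 1)) (1 / (i + 1 + 1 : ℝ))
      (by positivity)
    refine ⟨(i + 1, P + (q - p), p', q'), ⟨hpq', ?_⟩, rfl, rfl, hv'⟩
    convert hest' using 3
    push_cast
    ring
  obtain ⟨f, hf0, hfP, hfR⟩ := exists_chain Pinv Rrel (0, 0, p0, q0) h00 hstep
  have hidxraw : ∀ i, (f i).1 = i := by
    intro i
    induction i with
    | zero => rw [hf0]
    | succ i ih => rw [(hfR i).1, ih]
  obtain ⟨Pf, pf, qf, hpqf, hPf0, hPfsucc, hcross, hest⟩ :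
      ∃ Pf pf qf : ℕ → ℕ, (∀ i, pf i < qf i) ∧ Pf 0 = 0 ∧
        (∀ i, Pf (i + 1) = Pf i + (qf i - pf i)) ∧
        (∀ i, Ψ i (qf i - 1) < Ψ (i + 1) (pf (i + 1))) ∧
        (∀ i, (((Pf i : ℝ)) * (R + ‖cc i‖) + (pf i : ℝ) * (R + ‖cc i‖) +
          (qf i : ℝ) * ‖avg (y ∘ Ψ i) (qf i) - cc i‖) / ((Pf i + (qf i - pf i) : ℕ))
          ≤ 1 / (i + 1 : ℝ)) := by
    refine ⟨fun i => (f i).2.1, fun i => (f i).2.2.1, fun i => (f i).2.2.2,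
      fun i => (hfP i).1, by show (f 0).2.1 = 0; rw [hf0], fun i => (hfR i).2.1, ?_, ?_⟩
    · intro i
      have h' := (hfR i).2.2
      rw [hidxraw i, hidxraw (i + 1)] at h'
      exact h'
    · intro i
      have h' := (hfP i).2
      rw [hidxraw i] at h'
      exact h'
  have hPfmono : StrictMono Pf := strictMono_nat_of_lt_succ fun i => by
    have := hpqf i
    rw [hPfsucc i]
    omega
  have hPfge : ∀ i, i ≤ Pf i := by
    intro i
    induction i with
    | zero => omega
    | succ i ih =>
      have h' : Pf i < Pf (i + 1) := hPfmono (by omega)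
      omega
  -- the interleaved subsequence
  set idx : ℕ → ℕ := fun N => Nat.findGreatest (fun i => Pf i ≤ N) N with hidxdef
  have hidxle : ∀ N, Pf (idx N) ≤ N := by
    intro N
    exact Nat.findGreatest_spec (P := fun i => Pf i ≤ N) (Nat.zero_le N)
      (show Pf 0 ≤ N by rw [hPf0]; omega)
  have hidxlt : ∀ N, N < Pf (idx N + 1) := by
    intro N
    rcases le_or_gt (idx N + 1) N with h | h
    · by_contra hc
      exact Nat.findGreatest_is_greatest (Nat.lt_succ_self _) h (le_of_not_gt hc)
    · exact lt_of_lt_of_le h (hPfge _)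
  have hidxeq : ∀ i N, Pf i ≤ N → N < Pf (i + 1) → idx N = i := by
    intro i N h1 h2
    rcases lt_trichotomy (idx N) i with h | h | h
    · exfalso
      have h3 : Pf (idx N + 1) ≤ Pf i := hPfmono.monotone (by omega : idx N + 1 ≤ i)
      have h4 := hidxlt N
      omega
    · exact h
    · exfalso
      have h3 : Pf (i + 1) ≤ Pf (idx N) := hPfmono.monotone (by omega : i + 1 ≤ idx N)
      have h4 := hidxle N
      omega
  set τ : ℕ → ℕ := fun N => Ψ (idx N) (pf (idx N) + (N - Pf (idx N))) with hτdef
  have hτblock : ∀ i r, r < qf i - pf i → τ (Pf i + r) = Ψ i (pf i + r) := by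
    intro i r hr
    have h1 : Pf i ≤ Pf i + r := Nat.le_add_right _ _
    have h2 : Pf i + r < Pf (i + 1) := by rw [hPfsucc i]; omega
    rw [hτdef]
    simp only [hidxeq i (Pf i + r) h1 h2]
    congr 1
    omega
  have hτmono : StrictMono τ := by
    apply strictMono_nat_of_lt_succ
    intro N
    set i : ℕ := idx N with hi
    have h1 : Pf i ≤ N := hidxle N
    have h2 : N < Pf (i + 1) := hidxlt N
    rcases lt_or_ge (N + 1) (Pf (i + 1)) with hlt | hge
    · have hidxN1 : idx (N + 1) = i := hidxeq i (N + 1) (by omega) hlt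
      rw [hτdef]
      simp only [← hi, hidxN1]
      apply hΨmono i
      omega
    · have hNeq : N + 1 = Pf (i + 1) := by omega
      have hidxN1 : idx (N + 1) = i + 1 := by
        apply hidxeq
        · omega
        · rw [hPfsucc (i + 1)]
          have := hpqf (i + 1)
          omega
      rw [hτdef]
      simp only [← hi, hidxN1]
      have hNoff : N - Pf i = qf i - pf i - 1 := by
        rw [hPfsucc i] at hNeq
        omega
      have hN1off : N + 1 - Pf (i + 1) = 0 := by omega
      rw [hNoff, hN1off, Nat.add_zero]
      have : pf i + (qf i - pf i - 1) = qf i - 1 := by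
        have := hpqf i
        omega
      rw [this]
      exact hcross i
  -- checkpoint estimates
  have hcheck : ∀ i, ‖avg (y ∘ τ) (Pf (i + 1)) - cc i‖ ≤ 1 / (i + 1 : ℝ) := by
    intro i
    have hb := block_est y R hR τ (Ψ i) (cc i) (Pf i) (pf i) (qf i) (hpqf i)
      (fun r hr => hτblock i r hr)
    rw [hPfsucc i]
    exact hb.trans (hest i)
  obtain ⟨L, hL⟩ := H τ hτmono
  have key : ∀ (c : E) (a b : ℕ), 1 ≤ a → (∀ j : ℕ, cc (a * j + b) = c) →
      Tendsto (fun j : ℕ => avg (y ∘ τ) (Pf (a * j + b + 1))) atTop (𝓝 c) := by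
    intro c a b ha hcc'
    rw [tendsto_iff_norm_sub_tendsto_zero]
    apply squeeze_zero (fun j => norm_nonneg _) (g := fun j : ℕ => 1 / (a * j + b + 1 : ℝ))
    · intro j
      have := hcheck (a * j + b)
      rw [hcc' j] at this
      convert this using 3
      push_cast
      ring
    · apply squeeze_zero (fun j => by positivity) (g := fun j : ℕ => 1 / (j + 1 : ℝ))
      · intro j
        apply one_div_le_one_div_of_le (by positivity)
        push_cast
        have ha' : (1 : ℝ) ≤ (a : ℝ) := by exact_mod_cast ha
        have hj' : (0 : ℝ) ≤ (j : ℝ) := Nat.cast_nonneg j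
        have hb' : (0 : ℝ) ≤ (b : ℝ) := Nat.cast_nonneg b
        nlinarith
      · exact tendsto_one_div_add_atTop_nhds_zero_nat
  have heven : ∀ j : ℕ, cc (2 * j + 0) = c₁ := by
    intro j
    have : Even (2 * j + 0) := ⟨j, by ring⟩
    simp only [hccdef, if_pos this]
  have hodd : ∀ j : ℕ, cc (2 * j + 1) = c₂ := by
    intro j
    have : ¬ Even (2 * j + 1) := by
      rintro ⟨r, hr⟩
      omega
    simp only [hccdef, if_neg this]
  have hmono1 : StrictMono (fun j : ℕ => Pf (2 * j + 0 + 1)) := by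
    intro a b hab
    exact hPfmono (by omega)
  have hmono2 : StrictMono (fun j : ℕ => Pf (2 * j + 1 + 1)) := by
    intro a b hab
    exact hPfmono (by omega)
  have hL1 : Tendsto (fun j : ℕ => avg (y ∘ τ) (Pf (2 * j + 0 + 1))) atTop (𝓝 L) :=
    hL.comp hmono1.tendsto_atTop
  have hL2 : Tendsto (fun j : ℕ => avg (y ∘ τ) (Pf (2 * j + 1 + 1))) atTop (𝓝 L) :=
    hL.comp hmono2.tendsto_atTop
  have hc1L : c₁ = L := tendsto_nhds_unique (key c₁ 2 0 (by norm_num) heven) hL1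
  have hc2L : c₂ = L := tendsto_nhds_unique (key c₂ 2 1 (by norm_num) hodd) hL2
  rw [hc1L, hc2L]

end Analysis

section Main

variable {E : Type*} [NormedAddCommGroup E] [NormedSpace ℝ E] [CompleteSpace E]

theorem erdos_magidor (u : ℕ → E) (hb : Bornology.IsBounded (Set.range u)) :
    ∃ φ : ℕ → ℕ, StrictMono φ ∧
      ((∃ y : E, ∀ ψ : ℕ → ℕ, StrictMono ψ →
          Tendsto (fun N : ℕ => (N : ℝ)⁻¹ • ∑ k ∈ Finset.range N, u (φ (ψ k)))
            atTop (𝓝 y)) ∨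
        (∀ ψ : ℕ → ℕ, StrictMono ψ → ¬ ∃ y : E,
          Tendsto (fun N : ℕ => (N : ℝ)⁻¹ • ∑ k ∈ Finset.range N, u (φ (ψ k)))
            atTop (𝓝 y))) := by
  obtain ⟨R, hR⟩ : ∃ R : ℝ, ∀ n, ‖u n‖ ≤ R := by
    obtain ⟨C, hC⟩ := isBounded_iff_forall_norm_le.1 hb
    exact ⟨C, fun n => hC _ (Set.mem_range_self n)⟩
  obtain ⟨M, hMinf, hM⟩ := main_comb u
  have hMinf' : {n | n ∈ M}.Infinite := hMinf
  set φ : ℕ → ℕ := Nat.nth (· ∈ M) with hφdef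
  have hφ : StrictMono φ := Nat.nth_strictMono hMinf'
  have hcorr : ∀ ψ : ℕ → ℕ, StrictMono ψ → ∃ X : Set ℕ, X.Infinite ∧ X ⊆ M ∧
      seqOf u X = fun k => u (φ (ψ k)) := by
    intro ψ hψ
    refine ⟨Set.range (φ ∘ ψ), Set.infinite_range_of_injective (hφ.comp hψ).injective,
      ?_, ?_⟩
    · rintro _ ⟨k, rfl⟩
      exact Nat.nth_mem_of_infinite hMinf' _
    · funext k
      show u (Nat.nth (· ∈ Set.range (φ ∘ ψ)) k) = u (φ (ψ k))
      rw [nth_range_strictMono (φ ∘ ψ) (hφ.comp hψ) k]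
      rfl
  have havg : ∀ ψ : ℕ → ℕ,
      (fun N : ℕ => (N : ℝ)⁻¹ • ∑ k ∈ Finset.range N, u (φ (ψ k)))
        = avg (fun k => u (φ (ψ k))) := fun ψ => rfl
  rcases hM with hpos | hneg
  · -- all Cesàro convergent
    have hconv : ∀ ψ : ℕ → ℕ, StrictMono ψ →
        ∃ L : E, Tendsto (avg (fun k => u (φ (ψ k)))) atTop (𝓝 L) := by
      intro ψ hψ
      obtain ⟨X, hXinf, hXM, hXeq⟩ := hcorr ψ hψ
      have hc := hpos X hXinf hXM
      rw [hXeq] at hc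
      exact cauchySeq_tendsto_of_complete hc
    obtain ⟨y0, hy0⟩ := hconv id strictMono_id
    refine ⟨φ, hφ, Or.inl ⟨y0, fun ψ hψ => ?_⟩⟩
    obtain ⟨L, hL⟩ := hconv ψ hψ
    have hH : ∀ τ : ℕ → ℕ, StrictMono τ →
        ∃ L : E, Tendsto (avg ((fun k => u (φ k)) ∘ τ)) atTop (𝓝 L) := fun τ hτ =>
      hconv τ hτ
    have heq : L = y0 := limits_unique (fun k => u (φ k)) R (fun k => hR _) hH ψ id hψ
      strictMono_id L y0 hL hy0
    rw [havg ψ]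
    rw [heq] at hL
    exact hL
  · -- none Cesàro convergent
    refine ⟨φ, hφ, Or.inr fun ψ hψ hex => ?_⟩
    obtain ⟨y, hy⟩ := hex
    obtain ⟨X, hXinf, hXM, hXeq⟩ := hcorr ψ hψ
    apply hneg X hXinf hXM
    rw [hXeq]
    rw [havg ψ] at hy
    exact hy.cauchySeq

end Main

end EM

end EMnamespace

/-- Erdős-Magidor theorem: every bounded sequence in a Banach space admits a subsequence
such that either all of its subsequences are Cesàro convergent (in norm) to the same
limit, or none of its subsequences is Cesàro convergent. -/
theorem stmt7 {X : Type*} [NormedAddCommGroup X] [NormedSpace ℝ X] [CompleteSpace X]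
    (u : ℕ → X) (hb : Bornology.IsBounded (Set.range u)) :
    ∃ φ : ℕ → ℕ, StrictMono φ ∧
      ((∃ y : X, ∀ ψ : ℕ → ℕ, StrictMono ψ →
          Tendsto (fun N : ℕ => (N : ℝ)⁻¹ • ∑ k ∈ Finset.range N, u (φ (ψ k)))
            atTop (𝓝 y)) ∨
        (∀ ψ : ℕ → ℕ, StrictMono ψ → ¬ ∃ y : X,
          Tendsto (fun N : ℕ => (N : ℝ)⁻¹ • ∑ k ∈ Finset.range N, u (φ (ψ k)))
            atTop (𝓝 y))) :=
  EM.erdos_magidor u hb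
end
end

section
/- Let γ < 𝔭 be an ordinal and {S_α}_{α<γ} a collection of families of infinite subsets of ℕ such that for each α: (i) if B ⊆ ℕ is infinite and B \ A is finite for some A ∈ S_α, then B ∈ S_α; (ii) every infinite subset of ℕ contains an element of S_α. Then every infinite subset of ℕ contains an element of ⋂_{α<γ} S_α. -/
open Filter Topology

noncomputable section

/-- The pseudo-intersection number 𝔭: the least cardinality of a family `M` of infinite
subsets of `ℕ` with the finite intersection property (every finite subfamily has infinite
intersection) admitting no infinite pseudo-intersection. -/
noncomputable def pseudoIntersectionNumber : Cardinal :=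
  sInf { c : Cardinal |
    ∃ M : Set (Set ℕ), Cardinal.mk M = c ∧ (∀ A ∈ M, A.Infinite) ∧
      (∀ F : Finset (Set ℕ), ↑F ⊆ M → (⋂ A ∈ F, A).Infinite) ∧
      ¬ ∃ A : Set ℕ, A.Infinite ∧ ∀ B ∈ M, (A \ B).Finite }

/-- Key property: any family of size `< 𝔭` of infinite sets with the FIP has a
pseudo-intersection. -/
lemma exists_pseudo_of_lt_p (M : Set (Set ℕ)) (hM : Cardinal.mk M < pseudoIntersectionNumber)
    (hinf : ∀ A ∈ M, A.Infinite)
    (hfip : ∀ F : Finset (Set ℕ), ↑F ⊆ M → (⋂ A ∈ F, A).Infinite) :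
    ∃ A : Set ℕ, A.Infinite ∧ ∀ B ∈ M, (A \ B).Finite := by
  by_contra h
  have hmem : Cardinal.mk ↑M ∈ { c : Cardinal |
      ∃ M : Set (Set ℕ), Cardinal.mk M = c ∧ (∀ A ∈ M, A.Infinite) ∧
        (∀ F : Finset (Set ℕ), ↑F ⊆ M → (⋂ A ∈ F, A).Infinite) ∧
        ¬ ∃ A : Set ℕ, A.Infinite ∧ ∀ B ∈ M, (A \ B).Finite } := ⟨M, rfl, hinf, hfip, h⟩
  exact absurd (csInf_le' hmem) hM.not_ge

/-- `𝔭` is infinite (given that it is positive). -/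
lemma aleph0_le_p_of_pos (h : 0 < pseudoIntersectionNumber) :
    Cardinal.aleph0 ≤ pseudoIntersectionNumber := by
  have hne : { c : Cardinal |
      ∃ M : Set (Set ℕ), Cardinal.mk M = c ∧ (∀ A ∈ M, A.Infinite) ∧
        (∀ F : Finset (Set ℕ), ↑F ⊆ M → (⋂ A ∈ F, A).Infinite) ∧
        ¬ ∃ A : Set ℕ, A.Infinite ∧ ∀ B ∈ M, (A \ B).Finite }.Nonempty := by
    by_contra hc
    rw [Set.not_nonempty_iff_eq_empty] at hc
    rw [pseudoIntersectionNumber, hc, Cardinal.sInf_empty] at h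
    exact lt_irrefl _ h
  have hmem := csInf_mem hne
  obtain ⟨M, hMc, hMi, hMf, hMn⟩ := hmem
  by_contra hlt
  push_neg at hlt
  rw [pseudoIntersectionNumber] at hlt
  rw [← hMc] at hlt
  have hfin : M.Finite := by
    rw [← Set.not_infinite]
    intro hinf
    haveI := hinf.to_subtype
    exact absurd (Cardinal.aleph0_le_mk ↑M) (not_le.2 hlt)
  refine hMn ⟨⋂ A ∈ hfin.toFinset, A, hMf _ (by simp), ?_⟩
  intro B hB
  have : (⋂ A ∈ hfin.toFinset, A) ⊆ B := Set.biInter_subset_of_mem (hfin.mem_toFinset.2 hB)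
  rw [Set.diff_eq_empty.2 this]
  exact Set.finite_empty

lemma add_one_lt_p {c : Cardinal} (h : c < pseudoIntersectionNumber) :
    c + 1 < pseudoIntersectionNumber := by
  rcases lt_or_ge c Cardinal.aleph0 with hc | hc
  · exact lt_of_lt_of_le (Cardinal.add_lt_aleph0 hc Cardinal.one_lt_aleph0)
      (aleph0_le_p_of_pos (pos_of_gt h))
  · rwa [Cardinal.add_one_eq hc]

open scoped Classical

/-- The transfinite diagonalization sequence. -/
noncomputable def seq8 (S : Ordinal → Set (Set ℕ)) (B : Set ℕ) : Ordinal → Set ℕ :=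
  fun α =>
    if h : ∃ A : Set ℕ, A.Infinite ∧ (A \ B).Finite ∧ ∀ β < α, (A \ seq8 S B β).Finite then
      if h2 : ∃ C ∈ S α, C ⊆ h.choose ∩ B then h2.choose else B
    else B
termination_by α => α

/-- Diagonalization below 𝔭: if `γ < 𝔭` is an ordinal and `{S_α}_{α<γ}` are families of
infinite subsets of `ℕ` such that each `S_α` is closed under almost-containment and every
infinite subset of `ℕ` contains an element of `S_α`, then every infinite subset of `ℕ`
contains an element of `⋂_{α<γ} S_α`. -/
theorem stmt8 (γ : Ordinal) (hγ : γ.card < pseudoIntersectionNumber)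
    (S : Ordinal → Set (Set ℕ))
    (hinf : ∀ α < γ, ∀ A ∈ S α, A.Infinite)
    (h1 : ∀ α < γ, ∀ A ∈ S α, ∀ B : Set ℕ, B.Infinite → (B \ A).Finite → B ∈ S α)
    (h2 : ∀ α < γ, ∀ B : Set ℕ, B.Infinite → ∃ C ∈ S α, C ⊆ B) :
    ∀ B : Set ℕ, B.Infinite → ∃ C, C ⊆ B ∧ ∀ α < γ, C ∈ S α := by
  classical
  intro B hB
  set f := seq8 S B with hf
  -- main step: given chain invariants below `α ≤ γ`, get a pseudo-intersection.
  have hstep : ∀ α ≤ γ,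
      (∀ β < α, (f β).Infinite ∧ f β ⊆ B ∧ ∀ β' < β, (f β \ f β').Finite) →
      ∃ A : Set ℕ, A.Infinite ∧ (A \ B).Finite ∧ ∀ β < α, (A \ f β).Finite := by
    intro α hαγ hchain
    set M : Set (Set ℕ) := insert B (f '' Set.Iio α) with hM
    have hcard : Cardinal.mk M < pseudoIntersectionNumber := by
      have h1' : Cardinal.mk (f '' Set.Iio α) ≤ α.card := by
        have : f '' Set.Iio α =
            Set.range (fun x : α.ToType => f ((Ordinal.ToType.mk (o := α)).symm x)) := by
          ext X
          constructor
          · rintro ⟨β, hβ, rfl⟩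
            exact ⟨Ordinal.ToType.mk (o := α) ⟨β, hβ⟩, by simp⟩
          · rintro ⟨x, rfl⟩
            exact ⟨_, ((Ordinal.ToType.mk (o := α)).symm x).2, rfl⟩
        rw [this, ← Cardinal.mk_toType]
        exact Cardinal.mk_range_le
      calc Cardinal.mk M ≤ Cardinal.mk (f '' Set.Iio α) + 1 := Cardinal.mk_insert_le
        _ ≤ α.card + 1 := by gcongr
        _ ≤ γ.card + 1 := by gcongr
        _ < pseudoIntersectionNumber := add_one_lt_p hγ
    have hMinf : ∀ A ∈ M, A.Infinite := by
      rintro A (rfl | ⟨β, hβ, rfl⟩)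
      · exact hB
      · exact (hchain β hβ).1
    have hfip : ∀ F : Finset (Set ℕ), ↑F ⊆ M → (⋂ A ∈ F, A).Infinite := by
      intro F hF
      -- first find an infinite `E ⊆ B` almost-contained in each member of `F`
      have hE : ∃ E : Set ℕ, E.Infinite ∧ ∀ X ∈ F, (E \ X).Finite := by
        by_cases hall : ∀ X ∈ F, X = B
        · exact ⟨B, hB, fun X hX => by rw [hall X hX, Set.diff_self]; exact Set.finite_empty⟩
        · push_neg at hall
          obtain ⟨X₀, hX₀F, hX₀⟩ := hall
          have hX₀M : X₀ ∈ M := hF hX₀F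
          rw [hM] at hX₀M
          rcases hX₀M with rfl | ⟨β₀, hβ₀, hfβ₀⟩
          · exact absurd rfl hX₀
          -- choice of indices
          set g : Set ℕ → Ordinal := fun X =>
            if h : ∃ β, β < α ∧ f β = X then h.choose else β₀ with hg
          have hgα : ∀ X ∈ F, g X < α := by
            intro X hX
            simp only [hg]
            by_cases h : ∃ β, β < α ∧ f β = X
            · rw [dif_pos h]; exact h.choose_spec.1
            · rw [dif_neg h]; exact hβ₀
          have hgf : ∀ X ∈ F, X ≠ B → f (g X) = X := by
            intro X hX hXB
            have : X ∈ M := hF hX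
            rw [hM] at this
            rcases this with rfl | ⟨β, hβ, hfβ⟩
            · exact absurd rfl hXB
            · have hex : ∃ β, β < α ∧ f β = X := ⟨β, hβ, hfβ⟩
              simp only [hg]
              rw [dif_pos hex]
              exact hex.choose_spec.2
          have hFne : F.Nonempty := ⟨X₀, hX₀F⟩
          set T := F.image g with hT
          have hTne : T.Nonempty := hFne.image g
          set βm := T.max' hTne with hβm
          obtain ⟨X₁, hX₁, hgX₁⟩ := Finset.mem_image.1 (T.max'_mem hTne)
          have hβmα : βm < α := by rw [hβm, ← hgX₁]; exact hgα X₁ hX₁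
          refine ⟨f βm, (hchain βm hβmα).1, ?_⟩
          intro X hX
          by_cases hXB : X = B
          · subst hXB
            rw [Set.diff_eq_empty.2 (hchain βm hβmα).2.1]
            exact Set.finite_empty
          · rw [← hgf X hX hXB]
            have hle : g X ≤ βm := Finset.le_max' T _ (Finset.mem_image_of_mem g hX)
            rcases lt_or_eq_of_le hle with hlt | heq
            · exact (hchain βm hβmα).2.2 _ hlt
            · rw [heq, Set.diff_self]; exact Set.finite_empty
      obtain ⟨E, hEinf, hEF⟩ := hE
      have hsub : E \ ⋃ X ∈ F, (E \ X) ⊆ ⋂ A ∈ F, A := by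
        intro x hx
        simp only [Set.mem_diff, Set.mem_iUnion, not_exists] at hx
        simp only [Set.mem_iInter]
        intro X hX
        by_contra hxX
        exact hx.2 X hX ⟨hx.1, hxX⟩
      have hfin : (⋃ X ∈ F, (E \ X)).Finite :=
        Set.Finite.biUnion F.finite_toSet (fun X hX => hEF X hX)
      exact ((hEinf.diff hfin)).mono hsub
    obtain ⟨A, hAinf, hA⟩ := exists_pseudo_of_lt_p M hcard hMinf hfip
    exact ⟨A, hAinf, hA B (Set.mem_insert _ _),
      fun β hβ => hA (f β) (Set.mem_insert_of_mem _ ⟨β, hβ, rfl⟩)⟩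
  -- the invariant, by transfinite induction
  have hInv : ∀ α < γ, f α ∈ S α ∧ f α ⊆ B ∧ ∀ β < α, (f α \ f β).Finite := by
    intro α
    induction α using Ordinal.induction with
    | h α IH =>
      intro hαγ
      have hchain : ∀ β < α, (f β).Infinite ∧ f β ⊆ B ∧ ∀ β' < β, (f β \ f β').Finite := by
        intro β hβ
        have := IH β hβ (hβ.trans hαγ)
        exact ⟨hinf β (hβ.trans hαγ) _ this.1, this.2.1, this.2.2⟩
      have hA := hstep α hαγ.le hchain
      have hPinf : (hA.choose ∩ B).Infinite := by
        have : hA.choose \ (hA.choose \ B) ⊆ hA.choose ∩ B := by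
          intro x hx
          simp only [Set.mem_diff, not_and, not_not] at hx
          exact ⟨hx.1, hx.2 hx.1⟩
        exact (hA.choose_spec.1.diff hA.choose_spec.2.1).mono this
      have hC : ∃ C ∈ S α, C ⊆ hA.choose ∩ B := h2 α hαγ _ hPinf
      have hfα : f α = hC.choose := by
        show seq8 S B α = hC.choose
        conv_lhs => rw [seq8]
        rw [dif_pos hA, dif_pos hC]
      rw [hfα]
      have hCs := hC.choose_spec
      refine ⟨hCs.1, hCs.2.trans Set.inter_subset_right, ?_⟩
      intro β hβ
      exact (hA.choose_spec.2.2 β hβ).subset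
        (Set.diff_subset_diff_left (hCs.2.trans Set.inter_subset_left))
  -- conclusion
  have hchainγ : ∀ β < γ, (f β).Infinite ∧ f β ⊆ B ∧ ∀ β' < β, (f β \ f β').Finite := by
    intro β hβ
    have := hInv β hβ
    exact ⟨hinf β hβ _ this.1, this.2.1, this.2.2⟩
  obtain ⟨A, hAinf, hAB, hAβ⟩ := hstep γ le_rfl hchainγ
  refine ⟨A ∩ B, Set.inter_subset_right, ?_⟩
  intro α hα
  have hCinf : (A ∩ B).Infinite := by
    have : A \ (A \ B) ⊆ A ∩ B := by
      intro x hx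
      simp only [Set.mem_diff, not_and, not_not] at hx
      exact ⟨hx.1, hx.2 hx.1⟩
    exact (hAinf.diff hAB).mono this
  exact h1 α hα _ (hInv α hα).1 _ hCinf
    ((hAβ α hα).subset (Set.diff_subset_diff_left Set.inter_subset_left))

end
end

section
/- Let {E_i}_{i∈I} be a family of topological vector spaces with |I| < 𝔭, let E = Π_{i∈I} E_i with the product topology and ρ_i the coordinate projections. Let (u_n) be a sequence in E such that for every infinite A ⊆ ℕ and every i ∈ I there is an infinite B ⊆ A such that (ρ_i(u_n))_{n∈C} is Cesàro convergent to 0 in E_i for every infinite C ⊆ B. Then there is a subsequence of (u_n) all of whose subsequences are Cesàro convergent to 0 in E. -/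
open Filter Topology

noncomputable section

/-- Families of fewer than 𝔭 infinite sets with the FIP have a pseudo-intersection. -/
lemma exists_pseudoInter {M : Set (Set ℕ)} (hM : Cardinal.mk M < pseudoIntersectionNumber)
    (hinf : ∀ A ∈ M, A.Infinite)
    (hfip : ∀ F : Finset (Set ℕ), ↑F ⊆ M → (⋂ A ∈ F, A).Infinite) :
    ∃ A : Set ℕ, A.Infinite ∧ ∀ B ∈ M, (A \ B).Finite := by
  by_contra hc
  have : pseudoIntersectionNumber ≤ Cardinal.mk M :=
    csInf_le' ⟨M, rfl, hinf, hfip, hc⟩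
  exact absurd this (not_le.mpr hM)

/-- An almost-decreasing (mod finite) chain of infinite sets indexed by fewer than 𝔭
indices has a pseudo-intersection. -/
lemma exists_pseudo_of_chain {I : Type} [LinearOrder I]
    (hI : Cardinal.mk I < pseudoIntersectionNumber) (g : I → Set ℕ) (s : Set I)
    (hinf : ∀ j ∈ s, (g j).Infinite)
    (hchain : ∀ j ∈ s, ∀ k ∈ s, j < k → (g k \ g j).Finite) :
    ∃ A : Set ℕ, A.Infinite ∧ ∀ j ∈ s, (A \ g j).Finite := by
  classical
  have hMcard : Cardinal.mk ↥(g '' s) < pseudoIntersectionNumber :=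
    lt_of_le_of_lt (le_trans Cardinal.mk_image_le (Cardinal.mk_set_le s)) hI
  have hMinf : ∀ A ∈ g '' s, A.Infinite := by rintro A ⟨j, hj, rfl⟩; exact hinf j hj
  have hfip : ∀ F : Finset (Set ℕ), ↑F ⊆ g '' s → (⋂ A ∈ F, A).Infinite := by
    intro F hF
    rcases F.eq_empty_or_nonempty with rfl | hFne
    · simpa using Set.infinite_univ
    · have hF' : ∀ x : {x // x ∈ F}, ∃ j, j ∈ s ∧ g j = (x : Set ℕ) := by
        intro x
        obtain ⟨j, hj, hgj⟩ := hF x.2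
        exact ⟨j, hj, hgj⟩
      choose idx hidxs hgidx using hF'
      obtain ⟨x0, hx0⟩ := hFne
      set T : Finset I := F.attach.image idx with hT
      have hTne : T.Nonempty := ⟨idx ⟨x0, hx0⟩, Finset.mem_image_of_mem _ (F.mem_attach _)⟩
      set m := T.max' hTne with hm
      have hmT : m ∈ T := T.max'_mem hTne
      obtain ⟨xm, _, hxm⟩ := Finset.mem_image.1 hmT
      have hms : m ∈ s := hxm ▸ hidxs xm
      have hdiff : ∀ x ∈ F, (g m \ x).Finite := by
        intro x hx
        have hle : idx ⟨x, hx⟩ ≤ m := T.le_max' _ (Finset.mem_image_of_mem _ (F.mem_attach _))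
        rcases lt_or_eq_of_le hle with hlt | heq
        · have := hchain _ (hidxs ⟨x, hx⟩) m hms hlt
          rwa [hgidx ⟨x, hx⟩] at this
        · have hgx : g m = x := by rw [← heq]; exact hgidx ⟨x, hx⟩
          rw [hgx]
          simp
      have hfin : (g m \ ⋂ x ∈ F, x).Finite := by
        refine (Set.Finite.biUnion F.finite_toSet hdiff).subset ?_
        intro a ha
        simp only [Set.mem_diff, Set.mem_iInter] at ha
        push_neg at ha
        obtain ⟨ham, x, hx, hax⟩ := ha
        exact Set.mem_biUnion hx ⟨ham, hax⟩
      refine Set.Infinite.mono ?_ ((hinf m hms).diff hfin)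
      intro a ha
      simp only [Set.mem_diff, not_and, not_not] at ha
      exact ha.2 ha.1
  obtain ⟨A, hA, hAB⟩ := exists_pseudoInter hMcard hMinf hfip
  exact ⟨A, hA, fun j hj => hAB (g j) ⟨j, hj, rfl⟩⟩

open scoped Classical

/-- Transfinite construction of an almost-decreasing chain of witnesses. -/
noncomputable def auxF {I : Type} [LinearOrder I]
    (wf : WellFounded ((· < ·) : I → I → Prop))
    (P : I → Set ℕ → Prop)
    (h : ∀ A : Set ℕ, A.Infinite → ∀ i, ∃ B ⊆ A, B.Infinite ∧ P i B) : I → Set ℕ :=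
  wf.fix (fun i rec =>
    if hex : ∃ A : Set ℕ, A.Infinite ∧ ∀ j (hj : j < i), (A \ rec j hj).Finite then
      (h hex.choose hex.choose_spec.1 i).choose
    else ∅)

lemma auxF_eq {I : Type} [LinearOrder I]
    (wf : WellFounded ((· < ·) : I → I → Prop))
    (P : I → Set ℕ → Prop)
    (h : ∀ A : Set ℕ, A.Infinite → ∀ i, ∃ B ⊆ A, B.Infinite ∧ P i B) (i : I) :
    auxF wf P h i =
      if hex : ∃ A : Set ℕ, A.Infinite ∧ ∀ j (_ : j < i), (A \ auxF wf P h j).Finite then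
        (h hex.choose hex.choose_spec.1 i).choose
      else ∅ :=
  wf.fix_eq _ i

lemma auxF_spec {I : Type} [LinearOrder I]
    (hI : Cardinal.mk I < pseudoIntersectionNumber)
    (wf : WellFounded ((· < ·) : I → I → Prop))
    (P : I → Set ℕ → Prop)
    (h : ∀ A : Set ℕ, A.Infinite → ∀ i, ∃ B ⊆ A, B.Infinite ∧ P i B) :
    ∀ i, (auxF wf P h i).Infinite ∧ P i (auxF wf P h i) ∧
      ∀ j, j < i → (auxF wf P h i \ auxF wf P h j).Finite := by
  intro i
  induction i using WellFounded.induction wf with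
  | _ i IH =>
    have hex : ∃ A : Set ℕ, A.Infinite ∧ ∀ j (_ : j < i), (A \ auxF wf P h j).Finite := by
      obtain ⟨A, hA, hAB⟩ := exists_pseudo_of_chain hI (auxF wf P h) {j | j < i}
        (fun j hj => (IH j hj).1)
        (fun j hj k hk hjk => (IH k hk).2.2 j hjk)
      exact ⟨A, hA, fun j hj => hAB j hj⟩
    have heq : auxF wf P h i = (h hex.choose hex.choose_spec.1 i).choose := by
      rw [auxF_eq wf P h i, dif_pos hex]
    obtain ⟨hsub, hinf, hP⟩ := (h hex.choose hex.choose_spec.1 i).choose_spec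
    refine ⟨heq ▸ hinf, heq ▸ hP, ?_⟩
    intro j hj
    have hsub' : auxF wf P h i ⊆ hex.choose := heq ▸ hsub
    exact (hex.choose_spec.2 j hj).subset (Set.diff_subset_diff_left hsub')

/-- The key combinatorial lemma: given fewer than 𝔭 "local" selection conditions, one can
find witnesses `f i` together with a single infinite set almost contained in all of them. -/
lemma key_family {I : Type} (hI : Cardinal.mk I < pseudoIntersectionNumber)
    (P : I → Set ℕ → Prop)
    (h : ∀ A : Set ℕ, A.Infinite → ∀ i, ∃ B ⊆ A, B.Infinite ∧ P i B) :
    ∃ f : I → Set ℕ, (∀ i, P i (f i)) ∧ ∃ A : Set ℕ, A.Infinite ∧ ∀ i, (A \ f i).Finite := by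
  classical
  letI : LinearOrder I := IsWellOrder.linearOrder WellOrderingRel
  have wf : WellFounded ((· < ·) : I → I → Prop) := WellOrderingRel.isWellOrder.wf
  have spec := auxF_spec hI wf P h
  refine ⟨auxF wf P h, fun i => (spec i).2.1, ?_⟩
  obtain ⟨A, hA, hAB⟩ := exists_pseudo_of_chain hI (auxF wf P h) Set.univ
    (fun j _ => (spec j).1) (fun j _ k _ hjk => (spec k).2.2 j hjk)
  exact ⟨A, hA, fun i => hAB i (Set.mem_univ i)⟩

/-- Cesàro convergence is insensitive to shifting (hence to changing finitely many terms). -/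
lemma cesaro_shift {G : Type*} [AddCommGroup G] [Module ℝ G] [TopologicalSpace G]
    [IsTopologicalAddGroup G] [ContinuousSMul ℝ G] (v : ℕ → G) (K : ℕ)
    (hv : Tendsto (fun N : ℕ => (N : ℝ)⁻¹ • ∑ k ∈ Finset.range N, v (k + K)) atTop (𝓝 0)) :
    Tendsto (fun N : ℕ => (N : ℝ)⁻¹ • ∑ k ∈ Finset.range N, v k) atTop (𝓝 0) := by
  have hinv : Tendsto (fun N : ℕ => (N : ℝ)⁻¹) atTop (𝓝 0) := tendsto_inv_atTop_nhds_zero_nat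
  have h1 : Tendsto (fun N : ℕ => (N : ℝ)⁻¹ • ∑ k ∈ Finset.range K, v k) atTop (𝓝 0) := by
    simpa using hinv.smul_const (∑ k ∈ Finset.range K, v k)
  have h3 : Tendsto (fun N : ℕ => ((N - K : ℕ) : ℝ)⁻¹ •
      ∑ k ∈ Finset.range (N - K), v (k + K)) atTop (𝓝 0) :=
    hv.comp (tendsto_sub_atTop_nat K)
  have h2 : Tendsto (fun N : ℕ => ((N - K : ℕ) : ℝ) * (N : ℝ)⁻¹) atTop (𝓝 1) := by
    have hlim : Tendsto (fun N : ℕ => 1 - (K : ℝ) * (N : ℝ)⁻¹) atTop (𝓝 1) := by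
      simpa using tendsto_const_nhds.sub (hinv.const_mul (K : ℝ))
    refine Tendsto.congr' ?_ hlim
    filter_upwards [eventually_ge_atTop (K + 1)] with N hN
    have h0 : (N : ℝ) ≠ 0 := Nat.cast_ne_zero.2 (by omega)
    rw [Nat.cast_sub (by omega : K ≤ N)]
    field_simp
  have h4 : Tendsto (fun N : ℕ => (((N - K : ℕ) : ℝ) * (N : ℝ)⁻¹) •
      (((N - K : ℕ) : ℝ)⁻¹ • ∑ k ∈ Finset.range (N - K), v (k + K))) atTop (𝓝 0) := by
    simpa using h2.smul h3
  have key : ∀ᶠ N : ℕ in atTop,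
      (N : ℝ)⁻¹ • (∑ k ∈ Finset.range K, v k) +
        (((N - K : ℕ) : ℝ) * (N : ℝ)⁻¹) •
          (((N - K : ℕ) : ℝ)⁻¹ • ∑ k ∈ Finset.range (N - K), v (k + K))
      = (N : ℝ)⁻¹ • ∑ k ∈ Finset.range N, v k := by
    filter_upwards [eventually_ge_atTop (K + 1)] with N hN
    have hne : ((N - K : ℕ) : ℝ) ≠ 0 := Nat.cast_ne_zero.2 (by omega)
    have hsum : ∑ k ∈ Finset.range N, v k
        = (∑ k ∈ Finset.range K, v k) + ∑ k ∈ Finset.range (N - K), v (k + K) := by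
      have hNK : K + (N - K) = N := by omega
      have := Finset.sum_range_add v K (N - K)
      rw [hNK] at this
      simpa [add_comm] using this
    rw [hsum, smul_add, smul_smul]
    congr 1
    rw [mul_comm ((N - K : ℕ) : ℝ) ((N : ℝ)⁻¹), mul_assoc, mul_inv_cancel₀ hne, mul_one]
  refine Tendsto.congr' key ?_
  simpa using h1.add h4

/-- Let `{E i}_{i ∈ I}` be topological vector spaces with `|I| < 𝔭` and `(u n)` a sequence
in the product. If for every infinite `A ⊆ ℕ` and every coordinate `i` there is an
infinite `B ⊆ A` such that every subsequence of `(u n i)` indexed inside `B` is Cesàro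
convergent to `0` in `E i`, then `(u n)` has a subsequence all of whose subsequences are
Cesàro convergent to `0` in the product topology. -/
theorem stmt9 {I : Type} (hI : Cardinal.mk I < pseudoIntersectionNumber)
    {E : I → Type*} [∀ i, AddCommGroup (E i)] [∀ i, Module ℝ (E i)]
    [∀ i, TopologicalSpace (E i)] [∀ i, IsTopologicalAddGroup (E i)]
    [∀ i, ContinuousSMul ℝ (E i)]
    (u : ℕ → ∀ i, E i)
    (h : ∀ A : Set ℕ, A.Infinite → ∀ i : I, ∃ B ⊆ A, B.Infinite ∧
      ∀ φ : ℕ → ℕ, StrictMono φ → Set.range φ ⊆ B →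
        Tendsto (fun N : ℕ => (N : ℝ)⁻¹ • ∑ k ∈ Finset.range N, u (φ k) i)
          atTop (𝓝 (0 : E i))) :
    ∃ φ : ℕ → ℕ, StrictMono φ ∧ ∀ ψ : ℕ → ℕ, StrictMono ψ →
      Tendsto (fun N : ℕ => (N : ℝ)⁻¹ • ∑ k ∈ Finset.range N, u (φ (ψ k)))
        atTop (𝓝 (0 : ∀ i, E i)) := by
  classical
  obtain ⟨f, hPf, A, hA, hAf⟩ := key_family hI
    (fun i B => ∀ φ' : ℕ → ℕ, StrictMono φ' → Set.range φ' ⊆ B →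
      Tendsto (fun N : ℕ => (N : ℝ)⁻¹ • ∑ k ∈ Finset.range N, u (φ' k) i)
        atTop (𝓝 (0 : E i))) h
  have hA' : (setOf (· ∈ A)).Infinite := hA
  refine ⟨Nat.nth (· ∈ A), Nat.nth_strictMono hA', ?_⟩
  intro ψ hψ
  rw [tendsto_pi_nhds]
  intro i
  have hcoord : ∀ N : ℕ, ((N : ℝ)⁻¹ • ∑ k ∈ Finset.range N, u (Nat.nth (· ∈ A) (ψ k))) i
      = (N : ℝ)⁻¹ • ∑ k ∈ Finset.range N, u (Nat.nth (· ∈ A) (ψ k)) i := by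
    intro N
    simp [Finset.sum_apply]
  simp only [hcoord, Pi.zero_apply]
  set σ : ℕ → ℕ := fun k => Nat.nth (· ∈ A) (ψ k) with hσ
  have hσmono : StrictMono σ := (Nat.nth_strictMono hA').comp hψ
  have hσA : ∀ k, σ k ∈ A := fun k => Nat.nth_mem_of_infinite hA' _
  have hfinpre : (σ ⁻¹' (A \ f i)).Finite :=
    (hAf i).preimage (Set.injOn_of_injective hσmono.injective)
  obtain ⟨K, hK⟩ := hfinpre.bddAbove
  have hKB : ∀ k, K < k → σ k ∈ f i := by
    intro k hk
    by_contra hnb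
    exact absurd (hK (⟨hσA k, hnb⟩ : σ k ∈ A \ f i)) (not_le.mpr hk)
  have hφ' : StrictMono (fun k => σ (k + (K + 1))) := by
    intro a b hab
    exact hσmono (by omega)
  have hrange : Set.range (fun k => σ (k + (K + 1))) ⊆ f i := by
    rintro _ ⟨k, rfl⟩
    exact hKB _ (by omega)
  have hv := hPf i _ hφ' hrange
  exact cesaro_shift (fun k => u (σ k) i) (K + 1) hv
end
end

section
/- Let {X_i}_{i∈I} be Banach spaces, 1 < p < ∞ with conjugate exponent q, and X = (⊕_{i∈I} X_i)_{ℓᵖ}. Let (y_j*) be a sequence in X* = (⊕ X_i*)_{ℓ^q} such that: (i) for every i ∈ I the sequence (ρ_i(y_j*))_j is μ(X_i*,X_i)-null; (ii) there is a norm convergent sequence (ξ̃_j) in ℓ^q(I) with ξ̃_j ≥ (||ρ_i(y_j*)||)_{i∈I} pointwise for all j. Then (y_j*) is μ(X*,X)-null. -/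
open Filter Topology MeasureTheory Pointwise ENNReal

noncomputable section

/-! ### Auxiliary lemmas -/

/-- Weakly compact sets are norm bounded (via Banach–Steinhaus). -/
lemma weaklyCompact_norm_bounded {X : Type*} [NormedAddCommGroup X] [NormedSpace ℝ X]
    {W : Set X} (hW : WeaklyCompact W) : ∃ M : ℝ, ∀ x ∈ W, ‖x‖ ≤ M := by
  have h1 : ∀ f : StrongDual ℝ X, ∃ C, ∀ x ∈ W, ‖f x‖ ≤ C := by
    intro f
    have hc : Continuous fun z : WeakSpace ℝ X => (topDualPairing ℝ X).flip z f :=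
      WeakBilin.eval_continuous _ f
    have hcomp := (hW.image hc).isBounded
    obtain ⟨C, hC⟩ := isBounded_iff_forall_norm_le.1 hcomp
    exact ⟨C, fun x hx => hC _ ⟨toWeakSpace ℝ X x, ⟨x, hx, rfl⟩, rfl⟩⟩
  set g : W → (StrongDual ℝ X) →L[ℝ] ℝ :=
    fun x => NormedSpace.inclusionInDoubleDual ℝ X x with hg
  have h2 : ∀ f, ∃ C, ∀ x : W, ‖g x f‖ ≤ C := by
    intro f
    obtain ⟨C, hC⟩ := h1 f
    exact ⟨C, fun x => hC x x.2⟩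
  obtain ⟨C', hC'⟩ := banach_steinhaus h2
  refine ⟨C', fun x hx => ?_⟩
  have := (NormedSpace.inclusionInDoubleDualLi ℝ (E := X)).norm_map x
  calc ‖x‖ = ‖NormedSpace.inclusionInDoubleDual ℝ X x‖ := this.symm
    _ ≤ C' := hC' ⟨x, hx⟩

/-- The image of a weakly compact set under a continuous linear map is weakly compact. -/
lemma WeaklyCompact.clm_image {X Y : Type*} [NormedAddCommGroup X] [NormedSpace ℝ X]
    [NormedAddCommGroup Y] [NormedSpace ℝ Y] {W : Set X} (hW : WeaklyCompact W)
    (f : X →L[ℝ] Y) : WeaklyCompact (f '' W) := by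
  have h := hW.image (WeakSpace.map f).continuous
  have heq : toWeakSpace ℝ Y '' (f '' W) = WeakSpace.map f '' (toWeakSpace ℝ X '' W) := by
    rw [Set.image_image, Set.image_image]
    rfl
  rwa [WeaklyCompact, heq]

lemma lp_single_sub {α : Type*} {E : α → Type*} [∀ i, NormedAddCommGroup (E i)]
    [DecidableEq α] (p : ℝ≥0∞) (i : α) (a b : E i) :
    lp.single p i (a - b) = lp.single p i a - lp.single p i b := by
  apply lp.ext
  funext j
  simp only [lp.coeFn_sub, Pi.sub_apply, lp.single_apply]
  by_cases h : j = i
  · subst h; simp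
  · simp [h]

lemma lp_sum_single_apply {α : Type*} {E : α → Type*} [∀ i, NormedAddCommGroup (E i)]
    [DecidableEq α] (p : ℝ≥0∞) (f : lp E p) (s : Finset α) (j : α) :
    (∑ i ∈ s, lp.single p i (f i)) j = if j ∈ s then f j else 0 := by
  simp only [lp.coeFn_sum, Finset.sum_apply, lp.single_apply, Finset.sum_dite_eq, Finset.sum_pi_single]

lemma lp_norm_compl_le {α : Type*} {E : α → Type*} [∀ i, NormedAddCommGroup (E i)]
    {p : ℝ≥0∞} (hp : 0 < p.toReal) [DecidableEq α] (f : lp E p) (s : Finset α) :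
    ‖f - ∑ i ∈ s, lp.single p i (f i)‖ ≤ ‖f‖ := by
  refine (Real.rpow_le_rpow_iff (lp.norm_nonneg' _) (lp.norm_nonneg' _) hp).1 ?_
  rw [lp.norm_compl_sum_single hp f s]
  have : (0:ℝ) ≤ ∑ i ∈ s, ‖f i‖ ^ p.toReal :=
    Finset.sum_nonneg fun i _ => Real.rpow_nonneg (norm_nonneg _) _
  linarith

/-- The coordinate projection as a continuous linear map on `lp E p`. -/
def lpProjCLM {α : Type*} (E : α → Type*) [∀ i, NormedAddCommGroup (E i)]
    [∀ i, NormedSpace ℝ (E i)] (p : ℝ≥0∞) [Fact (1 ≤ p)] (i : α) : lp E p →L[ℝ] E i :=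
  LinearMap.mkContinuous
    { toFun := fun f => f i
      map_add' := fun f g => by simp [lp.coeFn_add]
      map_smul' := fun c f => by simp [lp.coeFn_smul] }
    1 (fun f => by
      rw [one_mul]; exact lp.norm_apply_le_norm
        (by have : (1:ℝ≥0∞) ≤ p := Fact.out; intro h; rw [h] at this; simp at this) f i)

@[simp] lemma lpProjCLM_apply {α : Type*} (E : α → Type*) [∀ i, NormedAddCommGroup (E i)]
    [∀ i, NormedSpace ℝ (E i)] (p : ℝ≥0∞) [Fact (1 ≤ p)] (i : α) (f : lp E p) :
    lpProjCLM E p i f = f i := rfl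

set_option maxHeartbeats 1000000 in
/-- Let `X = (⊕_i X_i)_{ℓᵖ}`, `1 < p < ∞`, with dual `(⊕_i X_i*)_{ℓ^q}`, `1/p + 1/q = 1`.
If `(y j)` is a sequence in the dual whose coordinates are `μ(X_i*,X_i)`-null and which is
dominated pointwise by a norm convergent sequence in `ℓ^q(I)`, then `(y j)` is
`μ(X*,X)`-null (with the pairing `⟨y, x⟩ = ∑' i, y i (x i)`). -/
theorem stmt12 {I : Type} {E : I → Type*} [∀ i, NormedAddCommGroup (E i)]
    [∀ i, NormedSpace ℝ (E i)] [∀ i, CompleteSpace (E i)]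
    (p q : ℝ≥0∞) [Fact (1 ≤ p)] [Fact (1 ≤ q)]
    (hp1 : 1 < p) (hpt : p < ⊤) (hpq : 1 / p + 1 / q = 1)
    (y : ℕ → lp (fun i => StrongDual ℝ (E i)) q)
    (hcoord : ∀ i, ∀ W : Set (E i), WeaklyCompact W →
      TendstoUniformlyOn (fun j x => y j i x) 0 atTop W)
    (ξ : ℕ → lp (fun _ : I => ℝ) q) (ξlim : lp (fun _ : I => ℝ) q)
    (hconv : Tendsto ξ atTop (𝓝 ξlim))
    (hdom : ∀ j i, ‖y j i‖ ≤ ξ j i) :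
    ∀ W : Set (lp E p), WeaklyCompact W →
      TendstoUniformlyOn (fun j x => ∑' i, y j i (x i)) 0 atTop W := by
  classical
  -- basic exponent facts
  have hp0 : p ≠ 0 := (zero_lt_one.trans hp1).ne'
  have hptop : p ≠ ⊤ := hpt.ne
  have hqtop : q ≠ ⊤ := by
    intro h
    rw [h, ENNReal.div_top, add_zero, one_div, ENNReal.inv_eq_one] at hpq
    exact hp1.ne' hpq
  have hq0 : q ≠ 0 := (zero_lt_one.trans_le (Fact.out : (1:ℝ≥0∞) ≤ q)).ne'
  have hpt1 : 1 < p.toReal := by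
    have := (ENNReal.toReal_lt_toReal (by simp : (1:ℝ≥0∞) ≠ ⊤) hptop).2 hp1
    simpa using this
  have hpt_pos : 0 < p.toReal := lt_trans zero_lt_one hpt1
  have hconj : p.toReal.HolderConjugate q.toReal := by
    refine Real.holderConjugate_iff.2 ⟨hpt1, ?_⟩
    have h := congrArg ENNReal.toReal hpq
    rw [ENNReal.toReal_add (by simp [one_div, hp0]) (by simp [one_div, hq0])] at h
    simpa [one_div, ENNReal.toReal_inv] using h
  have hqt_pos : 0 < q.toReal := hconj.symm.pos
  intro W hW
  obtain ⟨M, hM⟩ := weaklyCompact_norm_bounded hW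
  set M₀ : ℝ := |M| + 1 with hM₀
  have hM₀pos : 0 < M₀ := by positivity
  have hMW : ∀ x ∈ W, ‖x‖ ≤ M₀ := fun x hx =>
    (hM x hx).trans (by have := le_abs_self M; linarith)
  rw [Metric.tendstoUniformlyOn_iff]
  intro ε hε
  set δ : ℝ := ε / (4 * M₀) with hδ
  have hδpos : 0 < δ := by positivity
  -- Step 1: eventually `‖ξ j - ξlim‖ < δ`
  have h1 : ∀ᶠ j in atTop, ‖ξ j - ξlim‖ < δ := by
    have := hconv.eventually (Metric.ball_mem_nhds ξlim hδpos)
    filter_upwards [this] with j hj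
    simpa [Metric.mem_ball, dist_eq_norm] using hj
  -- Step 2: a finite set `F` capturing most of `ξlim`
  obtain ⟨F, hF⟩ : ∃ F : Finset I, ‖ξlim - ∑ i ∈ F, lp.single q i (ξlim i)‖ < δ := by
    have hs := lp.hasSum_single hqtop ξlim
    have := (hs.eventually (Metric.ball_mem_nhds ξlim hδpos)).exists
    obtain ⟨F, hF⟩ := this
    exact ⟨F, by simpa [Metric.mem_ball, dist_eq_norm, norm_sub_rev] using hF⟩
  -- Step 3: eventually the tail of `ξ j` beyond `F` is small
  have h3 : ∀ᶠ j in atTop, ‖ξ j - ∑ i ∈ F, lp.single q i (ξ j i)‖ < 2 * δ := by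
    filter_upwards [h1] with j hj
    have key : ξ j - ∑ i ∈ F, lp.single q i (ξ j i)
        = ((ξ j - ξlim) - ∑ i ∈ F, lp.single q i ((ξ j - ξlim) i))
          + (ξlim - ∑ i ∈ F, lp.single q i (ξlim i)) := by
      have hsingle : ∀ i ∈ F, lp.single (E := fun _ : I => ℝ) q i
            (((ξ j - ξlim : lp (fun _ : I => ℝ) q) : ∀ _ : I, ℝ) i)
          = lp.single q i (ξ j i) - lp.single q i (ξlim i) := by
        intro i _
        have hcoe : ((ξ j - ξlim : lp (fun _ : I => ℝ) q) : ∀ _ : I, ℝ) i = ξ j i - ξlim i := by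
          simp [lp.coeFn_sub]
        rw [hcoe, lp_single_sub]
      rw [Finset.sum_congr rfl hsingle, Finset.sum_sub_distrib]
      abel
    rw [key]
    calc ‖_ + _‖ ≤ ‖(ξ j - ξlim) - ∑ i ∈ F, lp.single q i ((ξ j - ξlim) i)‖
        + ‖ξlim - ∑ i ∈ F, lp.single q i (ξlim i)‖ := norm_add_le _ _
      _ ≤ ‖ξ j - ξlim‖ + ‖ξlim - ∑ i ∈ F, lp.single q i (ξlim i)‖ := by
          gcongr
          exact lp_norm_compl_le hqt_pos (ξ j - ξlim) F
      _ < δ + δ := by exact add_lt_add hj hF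
      _ = 2 * δ := by ring
  -- Step 4: eventually the coordinates over `F` are uniformly small on `W`
  have h4 : ∀ᶠ j in atTop, ∀ i ∈ F, ∀ x ∈ W, ‖y j i (x i)‖ < ε / (2 * (F.card + 1)) := by
    rw [Filter.eventually_all_finset]
    intro i _
    have hWc : WeaklyCompact ((lpProjCLM E p i) '' W) := hW.clm_image _
    have hcu := hcoord i _ hWc
    rw [Metric.tendstoUniformlyOn_iff] at hcu
    have hpos : 0 < ε / (2 * (F.card + 1)) := by positivity
    filter_upwards [hcu _ hpos] with j hj x hx
    have := hj (x i) ⟨x, hx, rfl⟩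
    simpa [dist_eq_norm] using this
  -- combine
  filter_upwards [h3, h4] with j hj3 hj4 x hx
  set head : lp E p := ∑ i ∈ F, lp.single p i (x i) with hhead
  set r : lp E p := x - head with hrdef
  set Tξ : lp (fun _ : I => ℝ) q := ξ j - ∑ i ∈ F, lp.single q i (ξ j i) with hTdef
  have hr_apply : ∀ i, (r : ∀ i, E i) i = x i - (if i ∈ F then x i else 0) := by
    intro i
    simp only [hrdef, lp.coeFn_sub, Pi.sub_apply, hhead]
    rw [lp_sum_single_apply]
  have hr_memF : ∀ i ∈ F, (r : ∀ i, E i) i = 0 := by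
    intro i hi; rw [hr_apply, if_pos hi, sub_self]
  have hr_nmemF : ∀ i ∉ F, (r : ∀ i, E i) i = x i := by
    intro i hi; rw [hr_apply, if_neg hi, sub_zero]
  have hT_apply : ∀ i, (Tξ : ∀ _ : I, ℝ) i = ξ j i - (if i ∈ F then ξ j i else 0) := by
    intro i
    simp only [hTdef, lp.coeFn_sub, Pi.sub_apply]
    rw [lp_sum_single_apply]
  have hT_nmemF : ∀ i ∉ F, (Tξ : ∀ _ : I, ℝ) i = ξ j i := by
    intro i hi; rw [hT_apply, if_neg hi, sub_zero]
  -- pointwise bound on the tail terms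
  have hpb : ∀ i, ‖y j i ((r : ∀ i, E i) i)‖ ≤ ‖(Tξ : ∀ _ : I, ℝ) i‖ * ‖(r : ∀ i, E i) i‖ := by
    intro i
    by_cases hi : i ∈ F
    · rw [hr_memF i hi]
      simp
    · rw [hr_nmemF i hi, hT_nmemF i hi]
      calc ‖y j i (x i)‖ ≤ ‖y j i‖ * ‖x i‖ := (y j i).le_opNorm _
        _ ≤ ξ j i * ‖x i‖ := by gcongr; exact hdom j i
        _ ≤ ‖ξ j i‖ * ‖x i‖ := by gcongr; exact le_abs_self _
  -- the real-valued `lp` element recording the norms of `r`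
  have hrn_mem : Memℓp (fun i => ‖(r : ∀ i, E i) i‖) p := by
    apply memℓp_gen
    have := (lp.memℓp r).summable hpt_pos
    simpa using this
  set rn : lp (fun _ : I => ℝ) p := ⟨fun i => ‖(r : ∀ i, E i) i‖, hrn_mem⟩ with hrn
  have hrn_apply : ∀ i, (rn : ∀ _ : I, ℝ) i = ‖(r : ∀ i, E i) i‖ := fun _ => rfl
  have hrn_norm : ‖rn‖ = ‖r‖ := by
    rw [lp.norm_eq_tsum_rpow hpt_pos, lp.norm_eq_tsum_rpow hpt_pos]
    congr 1
    apply tsum_congr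
    intro i
    rw [hrn_apply]
    simp
  -- summability facts
  have hsum_mul : Summable fun i => ‖(Tξ : ∀ _ : I, ℝ) i‖ * ‖(rn : ∀ _ : I, ℝ) i‖ :=
    lp.summable_mul hconj.symm Tξ rn
  have hsum_mul' : Summable fun i => ‖(Tξ : ∀ _ : I, ℝ) i‖ * ‖(r : ∀ i, E i) i‖ := by
    refine hsum_mul.congr fun i => ?_
    rw [hrn_apply]
    simp
  have hsum_tail_norm : Summable fun i => ‖y j i ((r : ∀ i, E i) i)‖ :=
    Summable.of_nonneg_of_le (fun i => norm_nonneg _) hpb hsum_mul'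
  have hsum_tail : Summable fun i => y j i ((r : ∀ i, E i) i) := hsum_tail_norm.of_norm
  have hsum_head : Summable fun i => y j i ((head : ∀ i, E i) i) := by
    apply summable_of_ne_finset_zero (s := F)
    intro i hi
    have : (head : ∀ i, E i) i = 0 := by
      rw [hhead, lp_sum_single_apply, if_neg hi]
    rw [this, map_zero]
  -- splitting the sum
  have hsplit : ∑' i, y j i (x i)
      = (∑' i, y j i ((r : ∀ i, E i) i)) + ∑ i ∈ F, y j i (x i) := by
    have hfe : ∀ i, y j i (x i) = y j i ((r : ∀ i, E i) i) + y j i ((head : ∀ i, E i) i) := by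
      intro i
      rw [← map_add]
      congr 1
      have : (r : ∀ i, E i) i = x i - (head : ∀ i, E i) i := by
        simp [hrdef, lp.coeFn_sub]
      rw [this, sub_add_cancel]
    calc ∑' i, y j i (x i)
        = ∑' i, (y j i ((r : ∀ i, E i) i) + y j i ((head : ∀ i, E i) i)) := tsum_congr hfe
      _ = (∑' i, y j i ((r : ∀ i, E i) i)) + ∑' i, y j i ((head : ∀ i, E i) i) :=
          Summable.tsum_add hsum_tail hsum_head
      _ = (∑' i, y j i ((r : ∀ i, E i) i)) + ∑ i ∈ F, y j i (x i) := by
          congr 1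
          rw [tsum_eq_sum (s := F) (fun i hi => by
            rw [show (head : ∀ i, E i) i = 0 from by
              rw [hhead, lp_sum_single_apply, if_neg hi], map_zero])]
          apply Finset.sum_congr rfl
          intro i hi
          congr 1
          rw [hhead, lp_sum_single_apply, if_pos hi]
  -- tail estimate
  have htail : ‖∑' i, y j i ((r : ∀ i, E i) i)‖ ≤ 2 * δ * M₀ := by
    have e1 : ‖∑' i, y j i ((r : ∀ i, E i) i)‖ ≤ ∑' i, ‖y j i ((r : ∀ i, E i) i)‖ :=
      norm_tsum_le_tsum_norm hsum_tail_norm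
    have e2 : ∑' i, ‖y j i ((r : ∀ i, E i) i)‖
        ≤ ∑' i, ‖(Tξ : ∀ _ : I, ℝ) i‖ * ‖(rn : ∀ _ : I, ℝ) i‖ := by
      refine Summable.tsum_le_tsum (fun i => ?_) hsum_tail_norm hsum_mul
      rw [hrn_apply]
      simpa using hpb i
    have e3 : ∑' i, ‖(Tξ : ∀ _ : I, ℝ) i‖ * ‖(rn : ∀ _ : I, ℝ) i‖ ≤ ‖Tξ‖ * ‖rn‖ :=
      lp.tsum_mul_le_mul_norm' hconj.symm Tξ rn
    have e4 : ‖Tξ‖ * ‖rn‖ ≤ 2 * δ * M₀ := by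
      have hr_le : ‖r‖ ≤ M₀ := le_trans (lp_norm_compl_le hpt_pos x F) (hMW x hx)
      rw [hrn_norm]
      apply mul_le_mul hj3.le hr_le (norm_nonneg _) (by positivity)
    linarith
  -- head estimate
  have hheadest : ‖∑ i ∈ F, y j i (x i)‖ < ε / 2 := by
    have e1 : ‖∑ i ∈ F, y j i (x i)‖ ≤ ∑ i ∈ F, ‖y j i (x i)‖ := norm_sum_le _ _
    have e2 : ∑ i ∈ F, ‖y j i (x i)‖ ≤ F.card * (ε / (2 * (F.card + 1))) := by
      calc ∑ i ∈ F, ‖y j i (x i)‖ ≤ ∑ _i ∈ F, (ε / (2 * (F.card + 1))) :=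
            Finset.sum_le_sum fun i hi => (hj4 i hi x hx).le
        _ = F.card * (ε / (2 * (F.card + 1))) := by rw [Finset.sum_const, nsmul_eq_mul]
    have e3 : (F.card : ℝ) * (ε / (2 * (F.card + 1))) < ε / 2 := by
      have hc : (0:ℝ) < (F.card : ℝ) + 1 := by positivity
      have h := mul_lt_mul_of_pos_right (show (F.card:ℝ) < (F.card:ℝ) + 1 by linarith)
        (show (0:ℝ) < ε / (2 * ((F.card:ℝ) + 1)) by positivity)
      calc (F.card : ℝ) * (ε / (2 * ((F.card:ℝ) + 1)))
          < ((F.card:ℝ) + 1) * (ε / (2 * ((F.card:ℝ) + 1))) := h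
        _ = ε / 2 := by field_simp
    calc ‖∑ i ∈ F, y j i (x i)‖ ≤ ∑ i ∈ F, ‖y j i (x i)‖ := e1
      _ ≤ F.card * (ε / (2 * (F.card + 1))) := e2
      _ < ε / 2 := e3
  -- finish
  have : dist ((0 : lp E p → ℝ) x) (∑' i, y j i (x i)) = ‖∑' i, y j i (x i)‖ := by
    simp [dist_eq_norm]
  rw [this, hsplit]
  have h2δ : 2 * δ * M₀ = ε / 2 := by
    rw [hδ]
    field_simp
    ring
  calc ‖(∑' i, y j i ((r : ∀ i, E i) i)) + ∑ i ∈ F, y j i (x i)‖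
      ≤ ‖∑' i, y j i ((r : ∀ i, E i) i)‖ + ‖∑ i ∈ F, y j i (x i)‖ := norm_add_le _ _
    _ < ε / 2 + ε / 2 := by
        have := htail.trans_eq h2δ
        exact add_lt_add_of_le_of_lt this hheadest
    _ = ε := by ring
end
end
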